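/- arXiv:hep-th/9702026 — 5 statements merged into one kernel-verified Lean document; each statement's English description precedes it below -/
import Mathlib

section
/- Let $(\alpha_L)_{L\ge 0}$ and $(\beta_L)_{L\ge 0}$ be sequences of formal power series (or rational functions in $q$) satisfying $\beta_L = \sum_{i=0}^L \alpha_i / ((q)_{L-i}(aq)_{L+i})$, and let $(\gamma_L)$, $(\delta_L)$ satisfy $\gamma_L = \sum_{i\ge L} \delta_i / ((q)_{i-L}(aq)_{L+i})$ (with all sums convergent). Then $\sum_{L\ge 0} \alpha_L \gamma_L = \sum_{L\ge 0} \beta_L \delta_L$. -/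
open Finset

/-- The $q$-Pochhammer symbol $(x;q)_n = \prod_{k=0}^{n-1}(1-xq^k)$. -/
noncomputable def qp (q x : ℂ) (n : ℕ) : ℂ := ∏ k ∈ Finset.range n, (1 - x * q ^ k)

/-- Bailey's lemma: if $(\alpha,\beta)$ is a Bailey pair relative to $a$ and
$(\gamma,\delta)$ is a conjugate Bailey pair relative to $a$, then
$\sum_L \alpha_L \gamma_L = \sum_L \beta_L \delta_L$. -/
theorem bailey_lemma (q a : ℂ) (α β γ δ : ℕ → ℂ)
    (hβ : ∀ L, β L = ∑ i ∈ Finset.range (L + 1),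
      α i / (qp q q (L - i) * qp q (a * q) (L + i)))
    (hγ : ∀ L, HasSum (fun i : ℕ => δ (L + i) / (qp q q i * qp q (a * q) (L + (L + i)))) (γ L))
    (hsum : Summable (fun P : ℕ × ℕ =>
      α P.1 * δ (P.1 + P.2) / (qp q q P.2 * qp q (a * q) (P.1 + (P.1 + P.2)))))
    (hαγ : Summable (fun L => α L * γ L))
    (hβδ : Summable (fun L => β L * δ L)) :
    ∑' L, α L * γ L = ∑' L, β L * δ L := by
  set f : ℕ × ℕ → ℂ := fun P =>
    α P.1 * δ (P.1 + P.2) / (qp q q P.2 * qp q (a * q) (P.1 + (P.1 + P.2))) with hf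
  set F : ℕ × ℕ → ℂ := fun P =>
    if P.2 ≤ P.1 then α P.2 * δ P.1 / (qp q q (P.1 - P.2) * qp q (a * q) (P.1 + P.2)) else 0
    with hF
  set e : ℕ × ℕ → ℕ × ℕ := fun P => (P.1 + P.2, P.1) with he
  have hinj : Function.Injective e := by
    rintro ⟨j, i⟩ ⟨j', i'⟩ h
    simp only [he, Prod.mk.injEq] at h
    obtain ⟨h1, h2⟩ := h
    subst h2
    exact Prod.ext rfl (by omega)
  have hcomp : ∀ P : ℕ × ℕ, F (e P) = f P := by
    rintro ⟨j, i⟩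
    simp only [hf, hF, he]
    rw [if_pos (by omega)]
    have h1 : j + i - j = i := by omega
    have h2 : j + i + j = j + (j + i) := by omega
    rw [h1, h2]
  have hsupp : Function.support F ⊆ Set.range e := by
    rintro ⟨L, j⟩ h
    simp only [hF, Function.mem_support, ne_eq, ite_eq_right_iff, not_forall] at h
    obtain ⟨hle, -⟩ := h
    exact ⟨(j, L - j), by simp only [he]; exact Prod.ext (by omega) rfl⟩
  -- LHS
  have hL : ∑' L, α L * γ L = ∑' P : ℕ × ℕ, f P := by
    rw [Summable.tsum_prod' hsum (fun L => by
      have := ((hγ L).mul_left (α L)).summable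
      exact this.congr fun i => by simp only [hf, mul_div_assoc])]
    refine tsum_congr fun L => ?_
    have := ((hγ L).mul_left (α L)).tsum_eq
    rw [← this]
    refine tsum_congr fun i => ?_
    simp only [hf, mul_div_assoc]
  -- RHS
  have hFsum : Summable F := by
    have h0 : ∀ x ∉ Set.range e, F x = 0 := fun x hx => by
      by_contra h
      exact hx (hsupp h)
    rw [← Function.Injective.summable_iff hinj h0]
    exact hsum.congr fun P => (hcomp P).symm
  have hR : ∑' P : ℕ × ℕ, f P = ∑' L, β L * δ L := by
    calc ∑' P : ℕ × ℕ, f P = ∑' P : ℕ × ℕ, F (e P) := by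
          exact tsum_congr fun P => (hcomp P).symm
      _ = ∑' P : ℕ × ℕ, F P := Function.Injective.tsum_eq hinj hsupp
      _ = ∑' L, ∑' j, F (L, j) := Summable.tsum_prod' hFsum (fun L =>
          summable_of_ne_finset_zero (s := Finset.range (L + 1))
            (by intro j hj; simp only [hF]; rw [if_neg]; simp at hj; omega))
      _ = ∑' L, β L * δ L := by
          refine tsum_congr fun L => ?_
          rw [tsum_eq_sum (s := Finset.range (L + 1))
            (by intro j hj; simp only [hF]; rw [if_neg]; simp at hj; omega)]
          rw [hβ L, Finset.sum_mul]
          refine Finset.sum_congr rfl fun j hj => ?_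
          simp only [Finset.mem_range] at hj
          simp only [hF]
          rw [if_pos (by omega)]
          ring
  rw [hL, hR]
end

section
/- For any $a$, $q$ with $|q|<1$, any nonnegative integer $M$, and any $L$ with $0 \le L \le M$, the sequences $\gamma_L = \frac{(\rho_1)_L(\rho_2)_L (aq/\rho_1\rho_2)^L}{(aq/\rho_1)_L (aq/\rho_2)_L (q)_{M-L}(aq)_{M+L}}$ and $\delta_L = \frac{(\rho_1)_L(\rho_2)_L (aq/\rho_1\rho_2)^L (aq/\rho_1\rho_2)_{M-L}}{(aq/\rho_1)_M (aq/\rho_2)_M (q)_{M-L}}$ (with $\gamma_L = \delta_L = 0$ for $L > M$) form a conjugate Bailey pair, i.e. $\gamma_L = \sum_{i\ge L} \delta_i/((q)_{i-L}(aq)_{L+i})$ for all $L \ge 0$. -/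
open Finset

lemma qp_zero (q x : ℂ) : qp q x 0 = 1 := Finset.prod_range_zero _

lemma qp_one (q x : ℂ) : qp q x 1 = 1 - x := by simp [qp]

lemma qp_succ (q x : ℂ) (n : ℕ) : qp q x (n + 1) = qp q x n * (1 - x * q ^ n) :=
  Finset.prod_range_succ _ _

lemma fac_q (q : ℂ) (hq0 : ∀ n : ℕ, qp q q n ≠ 0) (m : ℕ) : (1 : ℂ) - q * q ^ m ≠ 0 := by
  have := hq0 (m + 1); rw [qp_succ] at this; exact right_ne_zero_of_mul this

lemma fac_aq (q a : ℂ) (haq : ∀ n : ℕ, qp q (a * q) n ≠ 0) (m : ℕ) :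
    (1 : ℂ) - a * q * q ^ m ≠ 0 := by
  have := haq (m + 1); rw [qp_succ] at this; exact right_ne_zero_of_mul this

/-- The summand of the finite (q-Saalschütz) sum. -/
noncomputable def Tm (q a ρ₁ ρ₂ : ℂ) (L i j : ℕ) : ℂ :=
  qp q ρ₁ (L + i) * qp q ρ₂ (L + i) * (a * q / (ρ₁ * ρ₂)) ^ (L + i) *
      qp q (a * q / (ρ₁ * ρ₂)) j /
    (qp q q j * qp q q i * qp q (a * q) (2 * L + i))

/-- The WZ-style certificate. -/
noncomputable def Rm (q a ρ₁ ρ₂ : ℂ) (L n i : ℕ) : ℂ :=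
  -(q * q ^ (n - i)) * (1 - q ^ i) * (1 - a * q / (ρ₁ * ρ₂) * q ^ (n - i)) *
      (1 - a * q ^ (2 * L + i)) /
    ((1 - q * q ^ n) * (1 - a * q * q ^ (2 * L + n)) * (1 - q * q ^ (n - i)))

/-- Ratio of successive right-hand sides. -/
noncomputable def Cc (q a ρ₁ ρ₂ : ℂ) (L n : ℕ) : ℂ :=
  (1 - a * q / ρ₁ * q ^ (L + n)) * (1 - a * q / ρ₂ * q ^ (L + n)) /
    ((1 - q * q ^ n) * (1 - a * q * q ^ (2 * L + n)))

/-- Closed form of the sum. -/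
noncomputable def RHSe (q a ρ₁ ρ₂ : ℂ) (L n : ℕ) : ℂ :=
  qp q ρ₁ L * qp q ρ₂ L * (a * q / (ρ₁ * ρ₂)) ^ L * qp q (a * q / ρ₁) (L + n) *
      qp q (a * q / ρ₂) (L + n) /
    (qp q (a * q / ρ₁) L * qp q (a * q / ρ₂) L * qp q q n * qp q (a * q) (n + 2 * L))

set_option maxHeartbeats 4000000 in
lemma smallA (q zv ρ₁ ρ₂ a z1 z2 qL qi qk : ℂ)
    (hz : zv * (ρ₁ * ρ₂) = a * q) (hz1 : z1 * ρ₁ = a * q) (hz2 : z2 * ρ₂ = a * q)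
    (hρ₁ : ρ₁ ≠ 0) (hρ₂ : ρ₂ ≠ 0)
    (hd1 : (1 - q * qk) ≠ 0) (hd2 : (1 - q * (q * qk)) ≠ 0)
    (hd3 : (1 - q * (qi * (qk * q))) ≠ 0)
    (hd4 : (1 - a * q * (qL * (qL * (qi * (qk * q))))) ≠ 0)
    (hd5 : (1 - q * qi) ≠ 0) (hd6 : (1 - a * q * (qL * (qL * qi))) ≠ 0) :
    (1 - zv * qk) * (1 - zv * (q * qk)) / ((1 - q * qk) * (1 - q * (q * qk)))
      = (1 - z1 * (qL * (qi * (qk * q)))) * (1 - z2 * (qL * (qi * (qk * q)))) /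
            ((1 - q * (qi * (qk * q))) * (1 - a * q * (qL * (qL * (qi * (qk * q)))))) *
          ((1 - zv * qk) / (1 - q * qk))
        + -(q * qk) * (1 - q * qi) * (1 - zv * qk) * (1 - a * q * (qL * (qL * qi))) /
              ((1 - q * (qi * (qk * q))) * (1 - a * q * (qL * (qL * (qi * (qk * q))))) * (1 - q * qk)) *
            ((1 - ρ₁ * (qL * qi)) * (1 - ρ₂ * (qL * qi)) * zv / ((1 - q * qi) * (1 - a * q * (qL * (qL * qi)))))
        - -(q * qk) * (1 - qi) * (1 - zv * (q * qk)) * (q - a * q * (qL * (qL * qi))) /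
              ((1 - q * (qi * (qk * q))) * (1 - a * q * (qL * (qL * (qi * (qk * q))))) * (1 - q * (q * qk))) *
            ((1 - zv * qk) / (1 - q * qk)) := by
  have e1 : z1 = zv * ρ₂ := mul_right_cancel₀ hρ₁ (by rw [hz1, ← hz]; ring)
  have e2 : z2 = zv * ρ₁ := mul_right_cancel₀ hρ₂ (by rw [hz2, ← hz]; ring)
  rw [← hz] at hd4 hd6 ⊢
  rw [e1, e2]
  have hD : (1 - q * qk) * (1 - q * (q * qk)) * (1 - q * (qi * (qk * q))) * (1 - zv * (ρ₁ * ρ₂) * (qL * (qL * (qi * (qk * q))))) * (1 - q * qi) * (1 - zv * (ρ₁ * ρ₂) * (qL * (qL * qi))) ≠ 0 :=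
    mul_ne_zero (mul_ne_zero (mul_ne_zero (mul_ne_zero (mul_ne_zero hd1 hd2) hd3) hd4) hd5) hd6
  apply mul_right_cancel₀ hD
  have E1 : (1 - zv * qk) * (1 - zv * (q * qk)) / ((1 - q * qk) * (1 - q * (q * qk))) * ((1 - q * qk) * (1 - q * (q * qk)) * (1 - q * (qi * (qk * q))) * (1 - zv * (ρ₁ * ρ₂) * (qL * (qL * (qi * (qk * q))))) * (1 - q * qi) * (1 - zv * (ρ₁ * ρ₂) * (qL * (qL * qi))))
      = (1 - zv * qk) * (1 - zv * (q * qk)) * ((1 - q * (qi * (qk * q))) * (1 - zv * (ρ₁ * ρ₂) * (qL * (qL * (qi * (qk * q))))) * (1 - q * qi) * (1 - zv * (ρ₁ * ρ₂) * (qL * (qL * qi)))) := by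
    rw [div_mul_eq_mul_div, div_eq_iff (mul_ne_zero hd1 hd2)]; ring
  have E2 : (1 - zv * ρ₂ * (qL * (qi * (qk * q)))) * (1 - zv * ρ₁ * (qL * (qi * (qk * q)))) /
            ((1 - q * (qi * (qk * q))) * (1 - zv * (ρ₁ * ρ₂) * (qL * (qL * (qi * (qk * q)))))) *
          ((1 - zv * qk) / (1 - q * qk)) * ((1 - q * qk) * (1 - q * (q * qk)) * (1 - q * (qi * (qk * q))) * (1 - zv * (ρ₁ * ρ₂) * (qL * (qL * (qi * (qk * q))))) * (1 - q * qi) * (1 - zv * (ρ₁ * ρ₂) * (qL * (qL * qi))))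
      = (1 - zv * ρ₂ * (qL * (qi * (qk * q)))) * (1 - zv * ρ₁ * (qL * (qi * (qk * q)))) * (1 - zv * qk) * ((1 - q * (q * qk)) * (1 - q * qi) * (1 - zv * (ρ₁ * ρ₂) * (qL * (qL * qi)))) := by
    rw [div_mul_div_comm, div_mul_eq_mul_div,
      div_eq_iff (mul_ne_zero (mul_ne_zero hd3 hd4) hd1)]; ring
  have E3 : -(q * qk) * (1 - q * qi) * (1 - zv * qk) * (1 - zv * (ρ₁ * ρ₂) * (qL * (qL * qi))) /
              ((1 - q * (qi * (qk * q))) * (1 - zv * (ρ₁ * ρ₂) * (qL * (qL * (qi * (qk * q))))) * (1 - q * qk)) *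
            ((1 - ρ₁ * (qL * qi)) * (1 - ρ₂ * (qL * qi)) * zv / ((1 - q * qi) * (1 - zv * (ρ₁ * ρ₂) * (qL * (qL * qi))))) * ((1 - q * qk) * (1 - q * (q * qk)) * (1 - q * (qi * (qk * q))) * (1 - zv * (ρ₁ * ρ₂) * (qL * (qL * (qi * (qk * q))))) * (1 - q * qi) * (1 - zv * (ρ₁ * ρ₂) * (qL * (qL * qi))))
      = (-(q * qk) * (1 - q * qi) * (1 - zv * qk) * (1 - zv * (ρ₁ * ρ₂) * (qL * (qL * qi)))) * ((1 - ρ₁ * (qL * qi)) * (1 - ρ₂ * (qL * qi)) * zv) * (1 - q * (q * qk)) := by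
    rw [div_mul_div_comm, div_mul_eq_mul_div,
      div_eq_iff (mul_ne_zero (mul_ne_zero (mul_ne_zero hd3 hd4) hd1) (mul_ne_zero hd5 hd6))]; ring
  have E4 : -(q * qk) * (1 - qi) * (1 - zv * (q * qk)) * (q - zv * (ρ₁ * ρ₂) * (qL * (qL * qi))) /
              ((1 - q * (qi * (qk * q))) * (1 - zv * (ρ₁ * ρ₂) * (qL * (qL * (qi * (qk * q))))) * (1 - q * (q * qk))) *
            ((1 - zv * qk) / (1 - q * qk)) * ((1 - q * qk) * (1 - q * (q * qk)) * (1 - q * (qi * (qk * q))) * (1 - zv * (ρ₁ * ρ₂) * (qL * (qL * (qi * (qk * q))))) * (1 - q * qi) * (1 - zv * (ρ₁ * ρ₂) * (qL * (qL * qi))))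
      = (-(q * qk) * (1 - qi) * (1 - zv * (q * qk)) * (q - zv * (ρ₁ * ρ₂) * (qL * (qL * qi)))) * (1 - zv * qk) * ((1 - q * qi) * (1 - zv * (ρ₁ * ρ₂) * (qL * (qL * qi)))) := by
    rw [div_mul_div_comm, div_mul_eq_mul_div,
      div_eq_iff (mul_ne_zero (mul_ne_zero (mul_ne_zero hd3 hd4) hd2) hd1)]; ring
  linear_combination E1 - E2 - E3 + E4

set_option maxHeartbeats 1000000 in
lemma smallB (q zv ρ₁ ρ₂ a z1 z2 qL qn : ℂ)
    (hz : zv * (ρ₁ * ρ₂) = a * q) (hz1 : z1 * ρ₁ = a * q) (hz2 : z2 * ρ₂ = a * q)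
    (hρ₁ : ρ₁ ≠ 0) (hρ₂ : ρ₂ ≠ 0)
    (hq : (1 - q) ≠ 0) (hn : (1 - q * qn) ≠ 0) (han : (1 - a * q * (qL * (qL * qn))) ≠ 0) :
    (1 - zv) / (1 - q) + (1 - ρ₁ * (qL * qn)) * (1 - ρ₂ * (qL * qn)) * zv / ((1 - q * qn) * (1 - a * q * (qL * (qL * qn))))
      = (1 - z1 * (qL * qn)) * (1 - z2 * (qL * qn)) / ((1 - q * qn) * (1 - a * q * (qL * (qL * qn))))
        - -((1 - qn) * (1 - zv) * (q - a * q * (qL * (qL * qn)))) / ((1 - q * qn) * (1 - a * q * (qL * (qL * qn))) * (1 - q)) := by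
  have e1 : z1 = zv * ρ₂ := mul_right_cancel₀ hρ₁ (by rw [hz1, ← hz]; ring)
  have e2 : z2 = zv * ρ₁ := mul_right_cancel₀ hρ₂ (by rw [hz2, ← hz]; ring)
  rw [← hz] at han ⊢
  rw [e1, e2]
  have hD : (1 - q) * (1 - q * qn) * (1 - zv * (ρ₁ * ρ₂) * (qL * (qL * qn))) ≠ 0 := mul_ne_zero (mul_ne_zero hq hn) han
  apply mul_right_cancel₀ hD
  have E1 : (1 - zv) / (1 - q) * ((1 - q) * (1 - q * qn) * (1 - zv * (ρ₁ * ρ₂) * (qL * (qL * qn)))) = (1 - zv) * ((1 - q * qn) * (1 - zv * (ρ₁ * ρ₂) * (qL * (qL * qn)))) := by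
    rw [div_mul_eq_mul_div, div_eq_iff hq]; ring
  have E2 : (1 - ρ₁ * (qL * qn)) * (1 - ρ₂ * (qL * qn)) * zv / ((1 - q * qn) * (1 - zv * (ρ₁ * ρ₂) * (qL * (qL * qn)))) * ((1 - q) * (1 - q * qn) * (1 - zv * (ρ₁ * ρ₂) * (qL * (qL * qn)))) = (1 - ρ₁ * (qL * qn)) * (1 - ρ₂ * (qL * qn)) * zv * (1 - q) := by
    rw [div_mul_eq_mul_div, div_eq_iff (mul_ne_zero hn han)]; ring
  have E3 : (1 - zv * ρ₂ * (qL * qn)) * (1 - zv * ρ₁ * (qL * qn)) / ((1 - q * qn) * (1 - zv * (ρ₁ * ρ₂) * (qL * (qL * qn)))) * ((1 - q) * (1 - q * qn) * (1 - zv * (ρ₁ * ρ₂) * (qL * (qL * qn)))) = (1 - zv * ρ₂ * (qL * qn)) * (1 - zv * ρ₁ * (qL * qn)) * (1 - q) := by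
    rw [div_mul_eq_mul_div, div_eq_iff (mul_ne_zero hn han)]; ring
  have E4 : -((1 - qn) * (1 - zv) * (q - zv * (ρ₁ * ρ₂) * (qL * (qL * qn)))) / ((1 - q * qn) * (1 - zv * (ρ₁ * ρ₂) * (qL * (qL * qn))) * (1 - q)) * ((1 - q) * (1 - q * qn) * (1 - zv * (ρ₁ * ρ₂) * (qL * (qL * qn)))) = -((1 - qn) * (1 - zv) * (q - zv * (ρ₁ * ρ₂) * (qL * (qL * qn)))) := by
    rw [div_mul_eq_mul_div, div_eq_iff (mul_ne_zero (mul_ne_zero hn han) hq)]; ring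
  linear_combination E1 + E2 - E3 + E4

set_option maxHeartbeats 4000000 in
lemma lemA (q a ρ₁ ρ₂ : ℂ)
    (hq0 : ∀ n : ℕ, qp q q n ≠ 0) (haq : ∀ n : ℕ, qp q (a * q) n ≠ 0)
    (hρ₁ : ρ₁ ≠ 0) (hρ₂ : ρ₂ ≠ 0) (L i k : ℕ) :
    Tm q a ρ₁ ρ₂ L i (k + 2)
      = Cc q a ρ₁ ρ₂ L (i + k + 1) * Tm q a ρ₁ ρ₂ L i (k + 1)
        + (Rm q a ρ₁ ρ₂ L (i + k + 1) (i + 1) * Tm q a ρ₁ ρ₂ L (i + 1) k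
           - Rm q a ρ₁ ρ₂ L (i + k + 1) i * Tm q a ρ₁ ρ₂ L i (k + 1)) := by
  have hd1 : (1 : ℂ) - q * q ^ k ≠ 0 := fac_q q hq0 k
  have hd2 : (1 : ℂ) - q * (q * q ^ k) ≠ 0 := by
    have := fac_q q hq0 (k + 1); rwa [show q * q ^ (k + 1) = q * (q * q ^ k) by ring] at this
  have hd3 : (1 : ℂ) - q * (q ^ i * (q ^ k * q)) ≠ 0 := by
    have := fac_q q hq0 (i + k + 1)
    rwa [show q * q ^ (i + k + 1) = q * (q ^ i * (q ^ k * q)) by ring] at this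
  have hd4 : (1 : ℂ) - a * q * (q ^ L * (q ^ L * (q ^ i * (q ^ k * q)))) ≠ 0 := by
    have := fac_aq q a haq (2 * L + (i + k + 1))
    rwa [show a * q * q ^ (2 * L + (i + k + 1))
        = a * q * (q ^ L * (q ^ L * (q ^ i * (q ^ k * q)))) by ring] at this
  have hd5 : (1 : ℂ) - q * q ^ i ≠ 0 := fac_q q hq0 i
  have hd6 : (1 : ℂ) - a * q * (q ^ L * (q ^ L * q ^ i)) ≠ 0 := by
    have := fac_aq q a haq (2 * L + i)
    rwa [show a * q * q ^ (2 * L + i) = a * q * (q ^ L * (q ^ L * q ^ i)) by ring] at this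
  have H := smallA q (a * q / (ρ₁ * ρ₂)) ρ₁ ρ₂ a (a * q / ρ₁) (a * q / ρ₂)
    (q ^ L) (q ^ i) (q ^ k)
    (div_mul_cancel₀ _ (mul_ne_zero hρ₁ hρ₂)) (div_mul_cancel₀ _ hρ₁) (div_mul_cancel₀ _ hρ₂)
    hρ₁ hρ₂ hd1 hd2 hd3 hd4 hd5 hd6
  simp only [Tm, Rm, Cc]
  rw [show i + k + 1 - (i + 1) = k by omega, show i + k + 1 - i = k + 1 by omega]
  rw [show L + (i + 1) = L + i + 1 by ring, show 2 * L + (i + 1) = 2 * L + i + 1 by ring,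
    show k + 2 = k + 1 + 1 by ring]
  rw [pow_succ (a * q / (ρ₁ * ρ₂)) (L + i)]
  simp only [qp_succ]
  generalize (a * q / (ρ₁ * ρ₂)) ^ (L + i) = Zp
  generalize qp q (a * q / (ρ₁ * ρ₂)) k = Zk
  simp only [division_def, mul_inv] at H ⊢
  linear_combination (qp q ρ₁ (L + i) * qp q ρ₂ (L + i) * Zp * Zk *
    (qp q q k)⁻¹ * (qp q q i)⁻¹ * (qp q (a * q) (2 * L + i))⁻¹) * H

set_option maxHeartbeats 4000000 in
lemma lemB (q a ρ₁ ρ₂ : ℂ)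
    (hq0 : ∀ n : ℕ, qp q q n ≠ 0) (haq : ∀ n : ℕ, qp q (a * q) n ≠ 0)
    (hρ₁ : ρ₁ ≠ 0) (hρ₂ : ρ₂ ≠ 0) (L n : ℕ) :
    Tm q a ρ₁ ρ₂ L n 1 + Tm q a ρ₁ ρ₂ L (n + 1) 0
      = Cc q a ρ₁ ρ₂ L n * Tm q a ρ₁ ρ₂ L n 0
        - Rm q a ρ₁ ρ₂ L n n * Tm q a ρ₁ ρ₂ L n 0 := by
  have hq1 : (1 : ℂ) - q ≠ 0 := by
    have := fac_q q hq0 0; rwa [pow_zero, mul_one] at this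
  have hn1 : (1 : ℂ) - q * q ^ n ≠ 0 := fac_q q hq0 n
  have han : (1 : ℂ) - a * q * (q ^ L * (q ^ L * q ^ n)) ≠ 0 := by
    have := fac_aq q a haq (2 * L + n)
    rwa [show a * q * q ^ (2 * L + n) = a * q * (q ^ L * (q ^ L * q ^ n)) by ring] at this
  have H := smallB q (a * q / (ρ₁ * ρ₂)) ρ₁ ρ₂ a (a * q / ρ₁) (a * q / ρ₂)
    (q ^ L) (q ^ n)
    (div_mul_cancel₀ _ (mul_ne_zero hρ₁ hρ₂)) (div_mul_cancel₀ _ hρ₁) (div_mul_cancel₀ _ hρ₂)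
    hρ₁ hρ₂ hq1 hn1 han
  simp only [Tm, Rm, Cc]
  rw [show n - n = 0 by omega]
  rw [show L + (n + 1) = L + n + 1 by ring, show 2 * L + (n + 1) = 2 * L + n + 1 by ring]
  rw [pow_succ (a * q / (ρ₁ * ρ₂)) (L + n)]
  simp only [qp_succ, qp_zero, qp_one]
  generalize (a * q / (ρ₁ * ρ₂)) ^ (L + n) = Zp
  simp only [division_def, mul_inv] at H ⊢
  linear_combination (qp q ρ₁ (L + n) * qp q ρ₂ (L + n) * Zp *
    (qp q q n)⁻¹ * (qp q (a * q) (2 * L + n))⁻¹) * H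

set_option maxHeartbeats 1000000 in
lemma lemC (q a ρ₁ ρ₂ : ℂ) (L n : ℕ) :
    Cc q a ρ₁ ρ₂ L n * RHSe q a ρ₁ ρ₂ L n = RHSe q a ρ₁ ρ₂ L (n + 1) := by
  simp only [Cc, RHSe]
  rw [show L + (n + 1) = L + n + 1 by ring, show n + 1 + 2 * L = n + 2 * L + 1 by ring]
  simp only [qp_succ]
  generalize (a * q / (ρ₁ * ρ₂)) ^ L = Zp
  simp only [division_def, mul_inv]
  ring

set_option maxHeartbeats 1000000 in
lemma keySum (q a ρ₁ ρ₂ : ℂ)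
    (hq0 : ∀ n : ℕ, qp q q n ≠ 0) (haq : ∀ n : ℕ, qp q (a * q) n ≠ 0)
    (hρ₁ : ρ₁ ≠ 0) (hρ₂ : ρ₂ ≠ 0)
    (h₁ : ∀ n : ℕ, qp q (a * q / ρ₁) n ≠ 0) (h₂ : ∀ n : ℕ, qp q (a * q / ρ₂) n ≠ 0)
    (L : ℕ) : ∀ n : ℕ,
    ∑ i ∈ Finset.range (n + 1), Tm q a ρ₁ ρ₂ L i (n - i) = RHSe q a ρ₁ ρ₂ L n := by
  intro n
  induction n with
  | zero =>
      rw [Finset.sum_range_one]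
      simp only [Tm, RHSe, Nat.sub_self, Nat.add_zero, Nat.zero_add, qp_zero, one_mul, mul_one]
      rw [div_eq_div_iff (haq (2 * L))
        (mul_ne_zero (mul_ne_zero (h₁ L) (h₂ L)) (haq (2 * L)))]
      ring
  | succ n ih =>
      rw [Finset.sum_range_succ, Finset.sum_range_succ,
        show n + 1 - (n + 1) = 0 by omega, show n + 1 - n = 1 by omega]
      have hA : ∀ i ∈ Finset.range n, Tm q a ρ₁ ρ₂ L i (n + 1 - i)
          = Cc q a ρ₁ ρ₂ L n * Tm q a ρ₁ ρ₂ L i (n - i)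
            + ((fun j => Rm q a ρ₁ ρ₂ L n j * Tm q a ρ₁ ρ₂ L j (n - j)) (i + 1)
               - (fun j => Rm q a ρ₁ ρ₂ L n j * Tm q a ρ₁ ρ₂ L j (n - j)) i) := by
        intro i hi
        rw [Finset.mem_range] at hi
        show Tm q a ρ₁ ρ₂ L i (n + 1 - i)
          = Cc q a ρ₁ ρ₂ L n * Tm q a ρ₁ ρ₂ L i (n - i)
            + (Rm q a ρ₁ ρ₂ L n (i + 1) * Tm q a ρ₁ ρ₂ L (i + 1) (n - (i + 1))
               - Rm q a ρ₁ ρ₂ L n i * Tm q a ρ₁ ρ₂ L i (n - i))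
        obtain ⟨k, hk⟩ : ∃ k, n = i + k + 1 := ⟨n - i - 1, by omega⟩
        subst hk
        rw [show i + k + 1 + 1 - i = k + 2 by omega, show i + k + 1 - i = k + 1 by omega,
          show i + k + 1 - (i + 1) = k by omega]
        exact lemA q a ρ₁ ρ₂ hq0 haq hρ₁ hρ₂ L i k
      rw [Finset.sum_congr rfl hA, Finset.sum_add_distrib,
        Finset.sum_range_sub (fun j => Rm q a ρ₁ ρ₂ L n j * Tm q a ρ₁ ρ₂ L j (n - j)) n,
        ← Finset.mul_sum]
      simp only [Nat.sub_self, Nat.sub_zero]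
      have hg0 : Rm q a ρ₁ ρ₂ L n 0 = 0 := by simp [Rm]
      rw [hg0]
      rw [Finset.sum_range_succ] at ih
      rw [Nat.sub_self] at ih
      have hB := lemB q a ρ₁ ρ₂ hq0 haq hρ₁ hρ₂ L n
      have hC := lemC q a ρ₁ ρ₂ L n
      linear_combination Cc q a ρ₁ ρ₂ L n * ih + hB + hC

/-- Bailey's original conjugate Bailey pair: the explicitly given sequences
$(\gamma,\delta)$ (supported on $0 \le L \le M$) satisfy
$\gamma_L = \sum_{i\ge L} \delta_i/((q)_{i-L}(aq)_{L+i})$ for all $L\ge 0$. -/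
theorem bailey_conjugate_pair (q a ρ₁ ρ₂ : ℂ) (M : ℕ)
    (hq : ‖q‖ < 1)
    (hq0 : ∀ n : ℕ, qp q q n ≠ 0)
    (haq : ∀ n : ℕ, qp q (a * q) n ≠ 0)
    (hρ₁ : ρ₁ ≠ 0) (hρ₂ : ρ₂ ≠ 0)
    (h₁ : ∀ n : ℕ, qp q (a * q / ρ₁) n ≠ 0)
    (h₂ : ∀ n : ℕ, qp q (a * q / ρ₂) n ≠ 0)
    (γ δ : ℕ → ℂ)
    (hγ : ∀ L, γ L = if L ≤ M then
      qp q ρ₁ L * qp q ρ₂ L * (a * q / (ρ₁ * ρ₂)) ^ L /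
        (qp q (a * q / ρ₁) L * qp q (a * q / ρ₂) L * qp q q (M - L) * qp q (a * q) (M + L))
      else 0)
    (hδ : ∀ L, δ L = if L ≤ M then
      qp q ρ₁ L * qp q ρ₂ L * (a * q / (ρ₁ * ρ₂)) ^ L * qp q (a * q / (ρ₁ * ρ₂)) (M - L) /
        (qp q (a * q / ρ₁) M * qp q (a * q / ρ₂) M * qp q q (M - L))
      else 0) :
    ∀ L, HasSum (fun i : ℕ => δ (L + i) / (qp q q i * qp q (a * q) (L + (L + i)))) (γ L) := by
  intro L
  by_cases hL : L ≤ M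
  · set n := M - L with hn
    have hM : M = L + n := by omega
    set K : ℂ := qp q (a * q / ρ₁) M * qp q (a * q / ρ₂) M with hK
    have hKne : K ≠ 0 := mul_ne_zero (h₁ M) (h₂ M)
    have hf0 : ∀ i ∉ Finset.range (n + 1),
        δ (L + i) / (qp q q i * qp q (a * q) (L + (L + i))) = 0 := by
      intro i hi
      rw [Finset.mem_range, not_lt] at hi
      rw [hδ, if_neg (by omega)]
      simp
    have hfe : ∀ i ∈ Finset.range (n + 1),
        δ (L + i) / (qp q q i * qp q (a * q) (L + (L + i)))
          = Tm q a ρ₁ ρ₂ L i (n - i) / K := by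
      intro i hi
      rw [Finset.mem_range] at hi
      rw [hδ, if_pos (by omega : L + i ≤ M), show M - (L + i) = n - i by omega,
        show L + (L + i) = 2 * L + i by ring]
      simp only [Tm]
      rw [div_div, div_div]
      congr 1
      ring
    have hsum : ∑ i ∈ Finset.range (n + 1),
        δ (L + i) / (qp q q i * qp q (a * q) (L + (L + i)))
          = RHSe q a ρ₁ ρ₂ L n / K := by
      rw [Finset.sum_congr rfl hfe, ← Finset.sum_div,
        keySum q a ρ₁ ρ₂ hq0 haq hρ₁ hρ₂ h₁ h₂ L n]
    have hγeq : γ L = RHSe q a ρ₁ ρ₂ L n / K := by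
      rw [hγ, if_pos hL, ← hn, show M + L = n + 2 * L by omega]
      simp only [RHSe]
      rw [show L + n = M by omega]
      rw [eq_div_iff hKne, div_mul_eq_mul_div]
      congr 1
      rw [hK]
      ring
    rw [hγeq, ← hsum]
    exact hasSum_sum_of_ne_finset_zero hf0
  · have hfun : (fun i : ℕ => δ (L + i) / (qp q q i * qp q (a * q) (L + (L + i))))
        = fun _ => (0 : ℂ) := by
      funext i
      rw [hδ, if_neg (by omega)]
      simp
    rw [hγ, if_neg hL, hfun]
    exact hasSum_zero
end

section
/- Let $(\alpha_L(a,q),\beta_L(a,q))$ be a Bailey pair relative to $a$ (as formal identities valid for $q$ replaced by $1/q$). Define $A_L = a^L q^{L^2}\alpha_L(a^{-1},q^{-1})$ and $B_L = a^{-L}q^{-L(L+1)}\beta_L(a^{-1},q^{-1})$. Then $(A,B)$ is again a Bailey pair relative to $a$ in base $q$, i.e. $B_L = \sum_{i=0}^L A_i/((q)_{L-i}(aq)_{L+i})$. -/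
open Finset

lemma qp_inv_base (q x : ℂ) (hq : q ≠ 0) (hx : x ≠ 0) (n : ℕ) :
    qp q⁻¹ x n = (-x) ^ n * (q ^ (∑ k ∈ range n, k))⁻¹ * qp q x⁻¹ n := by
  induction n with
  | zero => simp [qp]
  | succ n ih =>
    have hfac : 1 - x * (q⁻¹) ^ n = (-x) * (q ^ n)⁻¹ * (1 - x⁻¹ * q ^ n) := by
      field_simp
      rw [sub_mul, mul_assoc, ← mul_pow, one_div, inv_mul_cancel₀ hq, one_pow]; ring
    rw [show qp q⁻¹ x (n+1) = qp q⁻¹ x n * (1 - x * (q⁻¹)^n) from Finset.prod_range_succ _ _,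
      show qp q x⁻¹ (n+1) = qp q x⁻¹ n * (1 - x⁻¹ * q^n) from Finset.prod_range_succ _ _,
      ih, Finset.sum_range_succ, pow_add, hfac, pow_add, mul_inv]
    ring

lemma exp_id (L i : ℕ) (h : i ≤ L) :
    (L - i) + (∑ k ∈ range (L - i), k) + ((L + i) + ∑ k ∈ range (L + i), k)
      = L * (L + 1) + i ^ 2 := by
  obtain ⟨j, rfl⟩ := Nat.exists_eq_add_of_le h
  rw [Nat.add_sub_cancel_left]
  apply Nat.eq_of_mul_eq_mul_right (show 0 < 2 by norm_num)
  have g1 := Finset.sum_range_id_mul_two j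
  have g2 := Finset.sum_range_id_mul_two (i + j + i)
  rw [add_mul, add_mul, add_mul, add_mul, g1, g2]
  cases j with
  | zero => cases i with
    | zero => ring
    | succ i' => simp [Nat.succ_sub_one]; ring
  | succ j' =>
    have h1 : j' + 1 - 1 = j' := rfl
    have h2 : i + (j' + 1) + i - 1 = i + j' + i := by omega
    rw [h1, h2]
    ring

lemma coeff_key (q a : ℂ) (L i : ℕ) (hi : i ≤ L) :
    ((-q⁻¹) ^ (L - i) * (q ^ (∑ k ∈ range (L - i), k))⁻¹) *
    ((-(a⁻¹ * q⁻¹)) ^ (L + i) * (q ^ (∑ k ∈ range (L + i), k))⁻¹)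
    = (a ^ (L + i))⁻¹ * (q ^ (L * (L + 1) + i ^ 2))⁻¹ := by
  rw [← exp_id L i hi]
  have e1 : (-q⁻¹) ^ (L - i) = (-1) ^ (L - i) * (q ^ (L - i))⁻¹ := by
    rw [neg_pow, inv_pow]
  have e2 : (-(a⁻¹ * q⁻¹)) ^ (L + i) = (-1) ^ (L + i) * ((a ^ (L + i))⁻¹ * (q ^ (L + i))⁻¹) := by
    rw [neg_pow, mul_pow, inv_pow, inv_pow]
  have hsgn : ((-1 : ℂ)) ^ (L + i) = (-1) ^ (L - i) := by
    have h : L + i = (L - i) + 2 * i := by omega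
    rw [h, pow_add, pow_mul]
    simp
  have hs2 : ((-1 : ℂ)) ^ (L - i) * ((-1 : ℂ)) ^ (L - i) = 1 := by
    rw [← pow_add]
    have h : (L - i) + (L - i) = 2 * (L - i) := by ring
    rw [h, pow_mul]
    simp
  rw [e1, e2, hsgn, pow_add q ((L - i) + ∑ k ∈ range (L - i), k), pow_add q (L - i),
    pow_add q (L + i), mul_inv, mul_inv, mul_inv]
  linear_combination ((q ^ (L - i))⁻¹ * (q ^ (∑ k ∈ range (L - i), k))⁻¹ * (a ^ (L + i))⁻¹ *
    (q ^ (L + i))⁻¹ * (q ^ (∑ k ∈ range (L + i), k))⁻¹) * hs2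

/-- The dual Bailey pair: if $(\alpha,\beta)$ is a Bailey pair relative to $a^{-1}$
in base $q^{-1}$ (i.e. the original pair with $q \mapsto 1/q$, $a \mapsto 1/a$),
then $A_L = a^L q^{L^2}\alpha_L$, $B_L = a^{-L}q^{-L(L+1)}\beta_L$ form a
Bailey pair relative to $a$ in base $q$. -/
theorem dual_bailey_pair (q a : ℂ) (hq : q ≠ 0) (ha : a ≠ 0)
    (hq0 : ∀ n : ℕ, qp q q n ≠ 0)
    (haq : ∀ n : ℕ, qp q (a * q) n ≠ 0)
    (hq0' : ∀ n : ℕ, qp q⁻¹ q⁻¹ n ≠ 0)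
    (haq' : ∀ n : ℕ, qp q⁻¹ (a⁻¹ * q⁻¹) n ≠ 0)
    (α β A B : ℕ → ℂ)
    (hBP : ∀ L, β L = ∑ i ∈ Finset.range (L + 1),
      α i / (qp q⁻¹ q⁻¹ (L - i) * qp q⁻¹ (a⁻¹ * q⁻¹) (L + i)))
    (hA : ∀ L, A L = a ^ L * q ^ (L ^ 2) * α L)
    (hB : ∀ L, B L = (a ^ L)⁻¹ * (q ^ (L * (L + 1)))⁻¹ * β L) :
    ∀ L, B L = ∑ i ∈ Finset.range (L + 1),
      A i / (qp q q (L - i) * qp q (a * q) (L + i)) := by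
  intro L
  rw [hB L, hBP L, Finset.mul_sum]
  refine Finset.sum_congr rfl fun i hi => ?_
  have hiL : i ≤ L := Nat.lt_succ_iff.mp (Finset.mem_range.mp hi)
  rw [qp_inv_base q q⁻¹ hq (inv_ne_zero hq) (L - i),
    qp_inv_base q (a⁻¹ * q⁻¹) hq (mul_ne_zero (inv_ne_zero ha) (inv_ne_zero hq)) (L + i),
    inv_inv q, show (a⁻¹ * q⁻¹)⁻¹ = a * q by rw [mul_inv, inv_inv, inv_inv], hA i,
    mul_mul_mul_comm, coeff_key q a L i hiL, pow_add a, pow_add q (L * (L + 1)) (i ^ 2)]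
  have h1 := hq0 (L - i)
  have h2 := haq (L + i)
  field_simp
end

section
/- Let $(\alpha,\beta)$ be a Bailey pair relative to $a$. Define $\alpha'_L = \frac{(\rho_1)_L(\rho_2)_L(aq/\rho_1\rho_2)^L}{(aq/\rho_1)_L(aq/\rho_2)_L}\alpha_L$ and $\beta'_L = \sum_{r=0}^L \frac{(\rho_1)_r(\rho_2)_r(aq/\rho_1\rho_2)^r (aq/\rho_1\rho_2)_{L-r}}{(aq/\rho_1)_L(aq/\rho_2)_L(q)_{L-r}}\beta_r$. Then $(\alpha',\beta')$ is again a Bailey pair relative to $a$. -/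
open Finset

/-- Summand of the key q-Saalschütz-type sum. -/
noncomputable def Ff (q a ρ₁ ρ₂ : ℂ) (i n j : ℕ) : ℂ :=
  qp q ρ₁ (i + j) * qp q ρ₂ (i + j) * (a * q / (ρ₁ * ρ₂)) ^ (i + j) *
      qp q (a * q / (ρ₁ * ρ₂)) (n - j) /
    (qp q q j * qp q q (n - j) * qp q (a * q) (2 * i + j))

/-- Telescoping certificate. -/
noncomputable def Gg (q a ρ₁ ρ₂ : ℂ) (i n j : ℕ) : ℂ :=
  -(q ^ (n + 1 - j) * (1 - q ^ j) * (1 - a * q ^ (2 * i + j)) *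
      qp q ρ₁ (i + j) * qp q ρ₂ (i + j) * (a * q / (ρ₁ * ρ₂)) ^ (i + j) *
      qp q (a * q / (ρ₁ * ρ₂)) (n + 1 - j)) /
    (qp q q j * qp q q (n + 1 - j) * qp q (a * q) (2 * i + j))

/-- Closed form of the key sum. -/
noncomputable def Tt (q a ρ₁ ρ₂ : ℂ) (i n : ℕ) : ℂ :=
  qp q ρ₁ i * qp q ρ₂ i * (a * q / (ρ₁ * ρ₂)) ^ i *
      qp q (a * q / ρ₁) (n + i) * qp q (a * q / ρ₂) (n + i) /
    (qp q (a * q / ρ₁) i * qp q (a * q / ρ₂) i * qp q q n * qp q (a * q) (n + 2 * i))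

lemma one_sub_q_pow_ne (q : ℂ) (hq0 : ∀ n : ℕ, qp q q n ≠ 0) (k : ℕ) :
    (1 : ℂ) - q * q ^ k ≠ 0 := by
  have h := hq0 (k + 1); rw [qp_succ] at h
  exact (mul_ne_zero_iff.mp h).2

lemma one_sub_aq_pow_ne (q a : ℂ) (haq : ∀ n : ℕ, qp q (a * q) n ≠ 0) (k : ℕ) :
    (1 : ℂ) - a * q * q ^ k ≠ 0 := by
  have h := haq (k + 1); rw [qp_succ] at h
  exact (mul_ne_zero_iff.mp h).2

set_option maxHeartbeats 1600000 in
lemma mainAux (q a ρ₁ ρ₂ t P1 P2 Z : ℂ) (i n j : ℕ)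
    (hρ₁ : ρ₁ ≠ 0) (hρ₂ : ρ₂ ≠ 0) :
    (1 - q * (q ^ j * q ^ (n - j))) *
        (1 - a * q * (q ^ (2 * i + j) * q ^ (n - j))) *
        (P1 * P2 * t * Z * (1 - a * q / (ρ₁ * ρ₂) * q ^ (n - j)) *
          ((1 - q * q ^ j) * (1 - a * q * q ^ (2 * i + j)))) =
      (1 - a * q / ρ₁ * (q ^ (i + j) * q ^ (n - j))) *
        (1 - a * q / ρ₂ * (q ^ (i + j) * q ^ (n - j))) *
        (P1 * P2 * t * Z *
          ((1 - q * q ^ j) * ((1 - q * q ^ (n - j)) * (1 - a * q * q ^ (2 * i + j))))) +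
      (-(q ^ (n - j) * (1 - q ^ (j + 1)) * (1 - a * q ^ ((2 * i + j) + 1)) *
          (P1 * (1 - ρ₁ * q ^ (i + j))) *
          (P2 * (1 - ρ₂ * q ^ (i + j))) *
          (t * (a * q / (ρ₁ * ρ₂))) * Z) * (1 - q * q ^ (n - j)) -
        -(q ^ ((n - j) + 1) * (1 - q ^ j) * (1 - a * q ^ (2 * i + j)) *
          P1 * P2 * t *
          (Z * (1 - a * q / (ρ₁ * ρ₂) * q ^ (n - j)))) *
          ((1 - q * q ^ j) * (1 - a * q * q ^ (2 * i + j)))) := by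
  field_simp
  ring

set_option maxHeartbeats 1600000 in
/-- The local telescoping identity. -/
lemma L1 (q a ρ₁ ρ₂ : ℂ)
    (hq0 : ∀ n : ℕ, qp q q n ≠ 0) (haq : ∀ n : ℕ, qp q (a * q) n ≠ 0)
    (hρ₁ : ρ₁ ≠ 0) (hρ₂ : ρ₂ ≠ 0) (i n j : ℕ) (hj : j ≤ n) :
    (1 - q * q ^ n) * (1 - a * q * q ^ (2 * i + n)) * Ff q a ρ₁ ρ₂ i (n + 1) j =
    (1 - a * q / ρ₁ * q ^ (n + i)) * (1 - a * q / ρ₂ * q ^ (n + i)) * Ff q a ρ₁ ρ₂ i n j +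
      (Gg q a ρ₁ ρ₂ i n (j + 1) - Gg q a ρ₁ ρ₂ i n j) := by
  have e1 : n + 1 - j = (n - j) + 1 := by omega
  have e2 : n + 1 - (j + 1) = n - j := by omega
  have e3 : i + (j + 1) = (i + j) + 1 := by omega
  have e4 : 2 * i + (j + 1) = (2 * i + j) + 1 := by omega
  have p1 : q ^ n = q ^ j * q ^ (n - j) := by rw [← pow_add]; congr 1; omega
  have p2 : q ^ (2 * i + n) = q ^ (2 * i + j) * q ^ (n - j) := by
    rw [← pow_add]; congr 1; omega
  have p3 : q ^ (n + i) = q ^ (i + j) * q ^ (n - j) := by rw [← pow_add]; congr 1; omega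
  have hQj := hq0 j
  have hQn := hq0 (n - j)
  have hAQ := haq (2 * i + j)
  have hd1 := one_sub_q_pow_ne q hq0 j
  have hd2 := one_sub_q_pow_ne q hq0 (n - j)
  have hd3 := one_sub_aq_pow_ne q a haq (2 * i + j)
  have hM : qp q q j * qp q q (n - j) * qp q (a * q) (2 * i + j) *
      ((1 - q * q ^ j) * ((1 - q * q ^ (n - j)) * (1 - a * q * q ^ (2 * i + j)))) ≠ 0 :=
    mul_ne_zero (mul_ne_zero (mul_ne_zero hQj hQn) hAQ)
      (mul_ne_zero hd1 (mul_ne_zero hd2 hd3))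
  have ne1 : qp q q j * (qp q q (n - j) * (1 - q * q ^ (n - j))) * qp q (a * q) (2 * i + j) ≠ 0 :=
    mul_ne_zero (mul_ne_zero hQj (mul_ne_zero hQn hd2)) hAQ
  have ne0 : qp q q j * qp q q (n - j) * qp q (a * q) (2 * i + j) ≠ 0 :=
    mul_ne_zero (mul_ne_zero hQj hQn) hAQ
  have neg1 : qp q q j * (1 - q * q ^ j) * qp q q (n - j) *
      (qp q (a * q) (2 * i + j) * (1 - a * q * q ^ (2 * i + j))) ≠ 0 :=
    mul_ne_zero (mul_ne_zero (mul_ne_zero hQj hd1) hQn) (mul_ne_zero hAQ hd3)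
  have h1 : Ff q a ρ₁ ρ₂ i (n + 1) j =
      qp q ρ₁ (i + j) * qp q ρ₂ (i + j) * (a * q / (ρ₁ * ρ₂)) ^ (i + j) *
          qp q (a * q / (ρ₁ * ρ₂)) (n - j) * (1 - a * q / (ρ₁ * ρ₂) * q ^ (n - j)) *
          ((1 - q * q ^ j) * (1 - a * q * q ^ (2 * i + j))) /
        (qp q q j * qp q q (n - j) * qp q (a * q) (2 * i + j) *
          ((1 - q * q ^ j) * ((1 - q * q ^ (n - j)) * (1 - a * q * q ^ (2 * i + j))))) := by
    simp only [Ff, e1, qp_succ]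
    rw [div_eq_div_iff ne1 hM]; ring
  have h0 : Ff q a ρ₁ ρ₂ i n j =
      qp q ρ₁ (i + j) * qp q ρ₂ (i + j) * (a * q / (ρ₁ * ρ₂)) ^ (i + j) *
          qp q (a * q / (ρ₁ * ρ₂)) (n - j) *
          ((1 - q * q ^ j) * ((1 - q * q ^ (n - j)) * (1 - a * q * q ^ (2 * i + j)))) /
        (qp q q j * qp q q (n - j) * qp q (a * q) (2 * i + j) *
          ((1 - q * q ^ j) * ((1 - q * q ^ (n - j)) * (1 - a * q * q ^ (2 * i + j))))) := by
    simp only [Ff]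
    rw [div_eq_div_iff ne0 hM]; ring
  have hg1 : Gg q a ρ₁ ρ₂ i n (j + 1) =
      -(q ^ (n - j) * (1 - q ^ (j + 1)) * (1 - a * q ^ ((2 * i + j) + 1)) *
          (qp q ρ₁ (i + j) * (1 - ρ₁ * q ^ (i + j))) *
          (qp q ρ₂ (i + j) * (1 - ρ₂ * q ^ (i + j))) *
          ((a * q / (ρ₁ * ρ₂)) ^ (i + j) * (a * q / (ρ₁ * ρ₂))) *
          qp q (a * q / (ρ₁ * ρ₂)) (n - j)) * (1 - q * q ^ (n - j)) /
        (qp q q j * qp q q (n - j) * qp q (a * q) (2 * i + j) *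
          ((1 - q * q ^ j) * ((1 - q * q ^ (n - j)) * (1 - a * q * q ^ (2 * i + j))))) := by
    simp only [Gg, e2, e3, e4, qp_succ, pow_succ]
    rw [div_eq_div_iff neg1 hM]; ring
  have hg0 : Gg q a ρ₁ ρ₂ i n j =
      -(q ^ ((n - j) + 1) * (1 - q ^ j) * (1 - a * q ^ (2 * i + j)) *
          qp q ρ₁ (i + j) * qp q ρ₂ (i + j) * (a * q / (ρ₁ * ρ₂)) ^ (i + j) *
          (qp q (a * q / (ρ₁ * ρ₂)) (n - j) * (1 - a * q / (ρ₁ * ρ₂) * q ^ (n - j)))) *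
          ((1 - q * q ^ j) * (1 - a * q * q ^ (2 * i + j))) /
        (qp q q j * qp q q (n - j) * qp q (a * q) (2 * i + j) *
          ((1 - q * q ^ j) * ((1 - q * q ^ (n - j)) * (1 - a * q * q ^ (2 * i + j))))) := by
    simp only [Gg, e1, qp_succ]
    rw [div_eq_div_iff ne1 hM]; ring
  rw [h1, h0, hg1, hg0, p1, p2, p3]
  linear_combination (mainAux q a ρ₁ ρ₂ ((a * q / (ρ₁ * ρ₂)) ^ (i + j)) (qp q ρ₁ (i + j))
      (qp q ρ₂ (i + j)) (qp q (a * q / (ρ₁ * ρ₂)) (n - j)) i n j hρ₁ hρ₂) /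
    (qp q q j * qp q q (n - j) * qp q (a * q) (2 * i + j) *
      ((1 - q * q ^ j) * ((1 - q * q ^ (n - j)) * (1 - a * q * q ^ (2 * i + j)))))

lemma Gg_zero (q a ρ₁ ρ₂ : ℂ) (i n : ℕ) : Gg q a ρ₁ ρ₂ i n 0 = 0 := by
  simp [Gg]

set_option maxHeartbeats 800000 in
lemma L2 (q a ρ₁ ρ₂ : ℂ) (i n : ℕ) :
    (1 - q * q ^ n) * (1 - a * q * q ^ (2 * i + n)) * Ff q a ρ₁ ρ₂ i (n + 1) (n + 1) =
      -Gg q a ρ₁ ρ₂ i n (n + 1) := by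
  have e1 : n + 1 - (n + 1) = 0 := by omega
  simp only [Ff, Gg, e1, Nat.sub_self, qp_zero, pow_zero, one_mul, mul_one]
  ring

set_option maxHeartbeats 800000 in
lemma TtStep (q a ρ₁ ρ₂ : ℂ)
    (hq0 : ∀ n : ℕ, qp q q n ≠ 0) (haq : ∀ n : ℕ, qp q (a * q) n ≠ 0)
    (hρ₁ : ρ₁ ≠ 0) (hρ₂ : ρ₂ ≠ 0)
    (h₁ : ∀ n : ℕ, qp q (a * q / ρ₁) n ≠ 0) (h₂ : ∀ n : ℕ, qp q (a * q / ρ₂) n ≠ 0)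
    (i n : ℕ) :
    (1 - q * q ^ n) * (1 - a * q * q ^ (2 * i + n)) * Tt q a ρ₁ ρ₂ i (n + 1) =
      (1 - a * q / ρ₁ * q ^ (n + i)) * (1 - a * q / ρ₂ * q ^ (n + i)) * Tt q a ρ₁ ρ₂ i n := by
  have e1 : n + 1 + i = (n + i) + 1 := by omega
  have e2 : n + 1 + 2 * i = (n + 2 * i) + 1 := by omega
  have p2 : q ^ (n + 2 * i) = q ^ (2 * i + n) := by congr 1; omega
  simp only [Tt, e1, e2, qp_succ, p2]
  have h1i := h₁ i
  have h2i := h₂ i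
  have hn := hq0 n
  have haqn := haq (n + 2 * i)
  have hd1 := one_sub_q_pow_ne q hq0 n
  have hd2 := one_sub_aq_pow_ne q a haq (2 * i + n)
  have hA : (1 - q * q ^ n) * (1 - a * q * q ^ (2 * i + n)) ≠ 0 := mul_ne_zero hd1 hd2
  have hDen1 : qp q (a * q / ρ₁) i * qp q (a * q / ρ₂) i * (qp q q n * (1 - q * q ^ n)) *
      (qp q (a * q) (n + 2 * i) * (1 - a * q * q ^ (2 * i + n))) ≠ 0 :=
    mul_ne_zero (mul_ne_zero (mul_ne_zero h1i h2i) (mul_ne_zero hn hd1))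
      (mul_ne_zero haqn hd2)
  have hDen0A : qp q (a * q / ρ₁) i * qp q (a * q / ρ₂) i * qp q q n * qp q (a * q) (n + 2 * i) *
      ((1 - q * q ^ n) * (1 - a * q * q ^ (2 * i + n))) ≠ 0 :=
    mul_ne_zero (mul_ne_zero (mul_ne_zero (mul_ne_zero h1i h2i) hn) haqn) hA
  have hx : qp q ρ₁ i * qp q ρ₂ i * (a * q / (ρ₁ * ρ₂)) ^ i *
        (qp q (a * q / ρ₁) (n + i) * (1 - a * q / ρ₁ * q ^ (n + i))) *
        (qp q (a * q / ρ₂) (n + i) * (1 - a * q / ρ₂ * q ^ (n + i))) /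
      (qp q (a * q / ρ₁) i * qp q (a * q / ρ₂) i * (qp q q n * (1 - q * q ^ n)) *
        (qp q (a * q) (n + 2 * i) * (1 - a * q * q ^ (2 * i + n)))) =
      (1 - a * q / ρ₁ * q ^ (n + i)) * (1 - a * q / ρ₂ * q ^ (n + i)) *
        (qp q ρ₁ i * qp q ρ₂ i * (a * q / (ρ₁ * ρ₂)) ^ i * qp q (a * q / ρ₁) (n + i) *
          qp q (a * q / ρ₂) (n + i)) /
      (qp q (a * q / ρ₁) i * qp q (a * q / ρ₂) i * qp q q n * qp q (a * q) (n + 2 * i) *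
        ((1 - q * q ^ n) * (1 - a * q * q ^ (2 * i + n)))) := by
    rw [div_eq_div_iff hDen1 hDen0A]; ring
  rw [hx, ← div_div, ← mul_div_assoc, mul_div_cancel_left₀ _ hA, mul_div_assoc]

set_option maxHeartbeats 800000 in
lemma keyS (q a ρ₁ ρ₂ : ℂ)
    (hq0 : ∀ n : ℕ, qp q q n ≠ 0) (haq : ∀ n : ℕ, qp q (a * q) n ≠ 0)
    (hρ₁ : ρ₁ ≠ 0) (hρ₂ : ρ₂ ≠ 0)
    (h₁ : ∀ n : ℕ, qp q (a * q / ρ₁) n ≠ 0) (h₂ : ∀ n : ℕ, qp q (a * q / ρ₂) n ≠ 0)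
    (i : ℕ) : ∀ n : ℕ, ∑ j ∈ Finset.range (n + 1), Ff q a ρ₁ ρ₂ i n j = Tt q a ρ₁ ρ₂ i n := by
  intro n
  induction n with
  | zero =>
      rw [Finset.sum_range_one]
      simp only [Ff, Tt, Nat.add_zero, Nat.zero_add, Nat.sub_self, qp_zero, one_mul, mul_one]
      have := haq (2 * i)
      have := h₁ i
      have := h₂ i
      field_simp
  | succ n ih =>
      have hA1 := one_sub_q_pow_ne q hq0 n
      have hA2 := one_sub_aq_pow_ne q a haq (2 * i + n)
      have hA : (1 - q * q ^ n) * (1 - a * q * q ^ (2 * i + n)) ≠ 0 := mul_ne_zero hA1 hA2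
      have hsum : (1 - q * q ^ n) * (1 - a * q * q ^ (2 * i + n)) *
          ∑ j ∈ Finset.range (n + 1 + 1), Ff q a ρ₁ ρ₂ i (n + 1) j =
          (1 - a * q / ρ₁ * q ^ (n + i)) * (1 - a * q / ρ₂ * q ^ (n + i)) *
          ∑ j ∈ Finset.range (n + 1), Ff q a ρ₁ ρ₂ i n j := by
        rw [Finset.sum_range_succ, mul_add, Finset.mul_sum, Finset.mul_sum]
        have tele : ∑ j ∈ Finset.range (n + 1),
            (1 - q * q ^ n) * (1 - a * q * q ^ (2 * i + n)) * Ff q a ρ₁ ρ₂ i (n + 1) j =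
            ∑ j ∈ Finset.range (n + 1),
              ((1 - a * q / ρ₁ * q ^ (n + i)) * (1 - a * q / ρ₂ * q ^ (n + i)) *
                  Ff q a ρ₁ ρ₂ i n j +
                (Gg q a ρ₁ ρ₂ i n (j + 1) - Gg q a ρ₁ ρ₂ i n j)) :=
          Finset.sum_congr rfl fun j hj =>
            L1 q a ρ₁ ρ₂ hq0 haq hρ₁ hρ₂ i n j (Finset.mem_range_succ_iff.mp hj)
        rw [tele, Finset.sum_add_distrib,
          Finset.sum_range_sub (fun j => Gg q a ρ₁ ρ₂ i n j), Gg_zero,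
          L2 q a ρ₁ ρ₂ i n]
        ring
      have := hsum.trans (by rw [ih, ← TtStep q a ρ₁ ρ₂ hq0 haq hρ₁ hρ₂ h₁ h₂ i n])
      exact mul_left_cancel₀ hA this

lemma swapSum (N : ℕ) (f : ℕ → ℕ → ℂ) :
    ∑ r ∈ Finset.range (N + 1), ∑ i ∈ Finset.range (r + 1), f r i =
    ∑ i ∈ Finset.range (N + 1), ∑ r ∈ Finset.Ico i (N + 1), f r i := by
  simp_rw [Finset.range_eq_Ico]
  exact (Finset.sum_Ico_Ico_comm 0 (N + 1) fun i r => f r i).symm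

/-- One step of the Bailey chain: if $(\alpha,\beta)$ is a Bailey pair relative
to $a$, then so is $(\alpha',\beta')$ with
$\alpha'_L = \frac{(\rho_1)_L(\rho_2)_L(aq/\rho_1\rho_2)^L}{(aq/\rho_1)_L(aq/\rho_2)_L}\alpha_L$ and
$\beta'_L = \sum_{r=0}^{L}\frac{(\rho_1)_r(\rho_2)_r(aq/\rho_1\rho_2)^r(aq/\rho_1\rho_2)_{L-r}}
{(aq/\rho_1)_L(aq/\rho_2)_L(q)_{L-r}}\beta_r$. -/
theorem bailey_chain_step (q a ρ₁ ρ₂ : ℂ)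
    (hq0 : ∀ n : ℕ, qp q q n ≠ 0)
    (haq : ∀ n : ℕ, qp q (a * q) n ≠ 0)
    (hρ₁ : ρ₁ ≠ 0) (hρ₂ : ρ₂ ≠ 0)
    (h₁ : ∀ n : ℕ, qp q (a * q / ρ₁) n ≠ 0)
    (h₂ : ∀ n : ℕ, qp q (a * q / ρ₂) n ≠ 0)
    (α β α' β' : ℕ → ℂ)
    (hBP : ∀ L, β L = ∑ i ∈ Finset.range (L + 1),
      α i / (qp q q (L - i) * qp q (a * q) (L + i)))
    (hα' : ∀ L, α' L =
      qp q ρ₁ L * qp q ρ₂ L * (a * q / (ρ₁ * ρ₂)) ^ L /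
        (qp q (a * q / ρ₁) L * qp q (a * q / ρ₂) L) * α L)
    (hβ' : ∀ L, β' L = ∑ r ∈ Finset.range (L + 1),
      qp q ρ₁ r * qp q ρ₂ r * (a * q / (ρ₁ * ρ₂)) ^ r * qp q (a * q / (ρ₁ * ρ₂)) (L - r) /
        (qp q (a * q / ρ₁) L * qp q (a * q / ρ₂) L * qp q q (L - r)) * β r) :
    ∀ L, β' L = ∑ i ∈ Finset.range (L + 1),
      α' i / (qp q q (L - i) * qp q (a * q) (L + i)) := by
  intro L
  calc β' L = ∑ r ∈ Finset.range (L + 1),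
      qp q ρ₁ r * qp q ρ₂ r * (a * q / (ρ₁ * ρ₂)) ^ r * qp q (a * q / (ρ₁ * ρ₂)) (L - r) /
        (qp q (a * q / ρ₁) L * qp q (a * q / ρ₂) L * qp q q (L - r)) * β r := hβ' L
    _ = ∑ r ∈ Finset.range (L + 1), ∑ i ∈ Finset.range (r + 1),
        qp q ρ₁ r * qp q ρ₂ r * (a * q / (ρ₁ * ρ₂)) ^ r * qp q (a * q / (ρ₁ * ρ₂)) (L - r) /
          (qp q (a * q / ρ₁) L * qp q (a * q / ρ₂) L * qp q q (L - r)) *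
          (α i / (qp q q (r - i) * qp q (a * q) (r + i))) := by
        refine Finset.sum_congr rfl fun r _ => ?_
        rw [hBP r, Finset.mul_sum]
    _ = ∑ i ∈ Finset.range (L + 1), ∑ r ∈ Finset.Ico i (L + 1),
        qp q ρ₁ r * qp q ρ₂ r * (a * q / (ρ₁ * ρ₂)) ^ r * qp q (a * q / (ρ₁ * ρ₂)) (L - r) /
          (qp q (a * q / ρ₁) L * qp q (a * q / ρ₂) L * qp q q (L - r)) *
          (α i / (qp q q (r - i) * qp q (a * q) (r + i))) := swapSum L _
    _ = ∑ i ∈ Finset.range (L + 1), α' i / (qp q q (L - i) * qp q (a * q) (L + i)) := by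
        refine Finset.sum_congr rfl fun i hi => ?_
        have hiL : i ≤ L := Finset.mem_range_succ_iff.mp hi
        rw [Finset.sum_Ico_eq_sum_range, show L + 1 - i = (L - i) + 1 from by omega]
        have hterm : ∀ j ∈ Finset.range (L - i + 1),
            qp q ρ₁ (i + j) * qp q ρ₂ (i + j) * (a * q / (ρ₁ * ρ₂)) ^ (i + j) *
              qp q (a * q / (ρ₁ * ρ₂)) (L - (i + j)) /
              (qp q (a * q / ρ₁) L * qp q (a * q / ρ₂) L * qp q q (L - (i + j))) *
              (α i / (qp q q (i + j - i) * qp q (a * q) (i + j + i))) =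
            α i / (qp q (a * q / ρ₁) L * qp q (a * q / ρ₂) L) * Ff q a ρ₁ ρ₂ i (L - i) j := by
          intro j _
          rw [show i + j - i = j from by omega, show i + j + i = 2 * i + j from by omega,
            show L - (i + j) = L - i - j from by omega]
          simp only [Ff]
          ring
        rw [Finset.sum_congr rfl hterm, ← Finset.mul_sum,
          keyS q a ρ₁ ρ₂ hq0 haq hρ₁ hρ₂ h₁ h₂ i (L - i)]
        have hD1 : qp q (a * q / ρ₁) L * qp q (a * q / ρ₂) L *
            (qp q (a * q / ρ₁) i * qp q (a * q / ρ₂) i * qp q q (L - i) *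
              qp q (a * q) (L + i)) ≠ 0 :=
          mul_ne_zero (mul_ne_zero (h₁ L) (h₂ L))
            (mul_ne_zero (mul_ne_zero (mul_ne_zero (h₁ i) (h₂ i)) (hq0 (L - i)))
              (haq (L + i)))
        have hD2 : qp q (a * q / ρ₁) i * qp q (a * q / ρ₂) i *
            (qp q q (L - i) * qp q (a * q) (L + i)) ≠ 0 :=
          mul_ne_zero (mul_ne_zero (h₁ i) (h₂ i))
            (mul_ne_zero (hq0 (L - i)) (haq (L + i)))
        rw [hα' i]
        simp only [Tt]
        rw [show L - i + i = L from by omega, show L - i + 2 * i = L + i from by omega]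
        rw [div_mul_div_comm, div_mul_eq_mul_div, div_div, div_eq_div_iff hD1 hD2]
        ring
end

section
/- For $a \in \{0,1\}$ and $|q|<1$: $\frac{1}{(q)_\infty}\sum_{j=-\infty}^{\infty} \left( q^{j(10j+1+2a)} - q^{(2j+1)(5j+2-a)} \right) = \sum_{n=0}^{\infty} \frac{q^{n(n+a)}}{(q)_n}$. -/
open Finset

namespace RRaux
open Filter Topology

variable {q : ℂ}

lemma one_sub_pow_ne (hq : ‖q‖ < 1) (k : ℕ) : (1 : ℂ) - q ^ (k + 1) ≠ 0 := by
  intro h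
  have h1 : q ^ (k+1) = 1 := by linear_combination -h
  have : ‖q ^ (k+1)‖ < 1 := by
    rw [norm_pow]
    exact pow_lt_one₀ (norm_nonneg q) hq (Nat.succ_ne_zero k)
  rw [h1, norm_one] at this
  exact lt_irrefl _ this

lemma qp_eq (n : ℕ) : qp q q n = ∏ k ∈ range n, (1 - q ^ (k + 1)) := by
  unfold qp
  exact Finset.prod_congr rfl fun k _ => by rw [← pow_succ']

lemma qp_ne (hq : ‖q‖ < 1) (n : ℕ) : qp q q n ≠ 0 := by
  rw [qp_eq]
  exact Finset.prod_ne_zero_iff.2 fun k _ => one_sub_pow_ne hq k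

lemma qp_succ (n : ℕ) : qp q q (n + 1) = qp q q n * (1 - q ^ (n + 1)) := by
  rw [qp_eq, qp_eq, Finset.prod_range_succ]

/-- Gaussian binomial, as a complex number, zero outside `0 ≤ m ≤ N`. -/
noncomputable def cb (q : ℂ) (N : ℕ) (m : ℤ) : ℂ :=
  if 0 ≤ m ∧ m ≤ (N : ℤ) then qp q q N / (qp q q m.toNat * qp q q (N - m.toNat)) else 0

lemma cb_out {N : ℕ} {m : ℤ} (h : m < 0 ∨ (N : ℤ) < m) : cb q N m = 0 := by
  rw [cb, if_neg]; omega

lemma cb_eq_of {N k1 k2 : ℕ} (h : k1 + k2 = N) {m : ℤ} (hm : m = (k1 : ℤ)) :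
    cb q N m = qp q q N / (qp q q k1 * qp q q k2) := by
  subst hm
  have hin : 0 ≤ (k1 : ℤ) ∧ (k1 : ℤ) ≤ (N : ℤ) :=
    ⟨Int.ofNat_nonneg k1, by exact_mod_cast Nat.le.intro h⟩
  rw [cb, if_pos hin, Int.toNat_natCast]
  have hk : N - k1 = k2 := by omega
  rw [hk]

lemma cb_zero (hq : ‖q‖ < 1) (N : ℕ) : cb q N 0 = 1 := by
  rw [cb_eq_of (k1 := 0) (k2 := N) (by omega) (by norm_num)]
  have h0 : qp q q 0 = 1 := by simp [qp]
  rw [h0, one_mul, div_self (qp_ne hq N)]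

lemma cb_self (hq : ‖q‖ < 1) (N : ℕ) : cb q N N = 1 := by
  rw [cb_eq_of (k1 := N) (k2 := 0) (by omega) rfl]
  have h0 : qp q q 0 = 1 := by simp [qp]
  rw [h0, mul_one, div_self (qp_ne hq N)]

lemma pascalB (hq : ‖q‖ < 1) (N : ℕ) (m : ℤ) :
    cb q (N + 1) m = cb q N (m - 1) + q ^ m * cb q N m := by
  rcases lt_or_ge m 0 with h | h
  · rw [cb_out (Or.inl h), cb_out (Or.inl h),
      cb_out (Or.inl (show m - 1 < 0 by omega))]
    ring
  rcases eq_or_lt_of_le h with h0 | h1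
  · rw [← h0, cb_zero hq, cb_zero hq, cb_out (Or.inl (show (0:ℤ) - 1 < 0 by omega))]
    simp
  rcases le_or_gt m (N : ℤ) with h2 | h2
  · -- main case 1 ≤ m ≤ N
    obtain ⟨k, rfl⟩ : ∃ k : ℕ, m = ((k + 1 : ℕ) : ℤ) := ⟨(m - 1).toNat, by omega⟩
    have hkN : k + 1 ≤ N := by exact_mod_cast h2
    rw [cb_eq_of (k1 := k + 1) (k2 := N - k) (by omega) rfl,
        cb_eq_of (k1 := k) (k2 := N - k) (by omega)
          (show ((k + 1 : ℕ) : ℤ) - 1 = ((k : ℕ) : ℤ) by push_cast; ring),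
        cb_eq_of (k1 := k + 1) (k2 := N - (k + 1)) (by omega) rfl]
    have hpow : q ^ (k + 1) * q ^ (N - k) = q ^ (N + 1) := by
      rw [← pow_add]; congr 1; omega
    have e1 : qp q q (N + 1) = qp q q N * (1 - q ^ (k+1) * q ^ (N - k)) := by
      rw [qp_succ, hpow]
    have e2 : qp q q (k + 1) = qp q q k * (1 - q ^ (k + 1)) := qp_succ k
    have e3 : qp q q (N - k) = qp q q (N - (k + 1)) * (1 - q ^ (N - k)) := by
      have hx : N - k = (N - (k + 1)) + 1 := by omega
      rw [hx, qp_succ]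
    have hp1 : qp q q N ≠ 0 := qp_ne hq N
    have hp2 : qp q q k ≠ 0 := qp_ne hq k
    have hp3 : qp q q (N - (k + 1)) ≠ 0 := qp_ne hq _
    have hq1 : (1 : ℂ) - q ^ (k + 1) ≠ 0 := one_sub_pow_ne hq k
    have hq2 : (1 : ℂ) - q ^ (N - k) ≠ 0 := by
      have hx : N - k = (N - (k + 1)) + 1 := by omega
      rw [hx]; exact one_sub_pow_ne hq _
    have hz : q ^ (((k + 1 : ℕ) : ℤ)) = q ^ (k + 1 : ℕ) := zpow_natCast q (k+1)
    rw [hz, e1, e2, e3]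
    have hq3 : (1 : ℂ) - q ^ (k+1) * q ^ (N - k) ≠ 0 := by
      rw [hpow]; exact one_sub_pow_ne hq N
    field_simp
    ring
  rcases eq_or_lt_of_le (show (N:ℤ) + 1 ≤ m by omega) with h3 | h3
  · have hm : m = ((N + 1 : ℕ) : ℤ) := by push_cast; omega
    subst hm
    rw [cb_self hq, cb_out (Or.inr (show (N:ℤ) < ((N+1:ℕ):ℤ) by push_cast; omega)),
      show ((N + 1 : ℕ) : ℤ) - 1 = ((N : ℕ) : ℤ) by push_cast; ring, cb_self hq]
    ring
  · rw [cb_out (Or.inr (show ((N+1:ℕ):ℤ) < m by push_cast; omega)),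
      cb_out (Or.inr (show (N:ℤ) < m by push_cast; omega)),
      cb_out (Or.inr (show (N:ℤ) < m - 1 by push_cast; omega))]
    ring

lemma pascalA (hq : ‖q‖ < 1) (N : ℕ) (m : ℤ) :
    cb q (N + 1) m = cb q N m + q ^ ((N : ℤ) + 1 - m) * cb q N (m - 1) := by
  rcases lt_or_ge m 0 with h | h
  · rw [cb_out (Or.inl h), cb_out (Or.inl h),
      cb_out (Or.inl (show m - 1 < 0 by omega))]
    ring
  rcases eq_or_lt_of_le h with h0 | h1
  · rw [← h0, cb_zero hq, cb_zero hq, cb_out (Or.inl (show (0:ℤ) - 1 < 0 by omega))]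
    simp
  rcases le_or_gt m (N : ℤ) with h2 | h2
  · obtain ⟨k, rfl⟩ : ∃ k : ℕ, m = ((k + 1 : ℕ) : ℤ) := ⟨(m - 1).toNat, by omega⟩
    have hkN : k + 1 ≤ N := by exact_mod_cast h2
    rw [cb_eq_of (k1 := k + 1) (k2 := N - k) (by omega) rfl,
        cb_eq_of (k1 := k) (k2 := N - k) (by omega)
          (show ((k + 1 : ℕ) : ℤ) - 1 = ((k : ℕ) : ℤ) by push_cast; ring),
        cb_eq_of (k1 := k + 1) (k2 := N - (k + 1)) (by omega) rfl]
    have hpow : q ^ (k + 1) * q ^ (N - k) = q ^ (N + 1) := by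
      rw [← pow_add]; congr 1; omega
    have e1 : qp q q (N + 1) = qp q q N * (1 - q ^ (k+1) * q ^ (N - k)) := by
      rw [qp_succ, hpow]
    have e2 : qp q q (k + 1) = qp q q k * (1 - q ^ (k + 1)) := qp_succ k
    have e3 : qp q q (N - k) = qp q q (N - (k + 1)) * (1 - q ^ (N - k)) := by
      have hx : N - k = (N - (k + 1)) + 1 := by omega
      rw [hx, qp_succ]
    have hp1 : qp q q N ≠ 0 := qp_ne hq N
    have hp2 : qp q q k ≠ 0 := qp_ne hq k
    have hp3 : qp q q (N - (k + 1)) ≠ 0 := qp_ne hq _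
    have hq1 : (1 : ℂ) - q ^ (k + 1) ≠ 0 := one_sub_pow_ne hq k
    have hq2 : (1 : ℂ) - q ^ (N - k) ≠ 0 := by
      have hx : N - k = (N - (k + 1)) + 1 := by omega
      rw [hx]; exact one_sub_pow_ne hq _
    have hz : q ^ ((N : ℤ) + 1 - ((k + 1 : ℕ) : ℤ)) = q ^ (N - k : ℕ) := by
      rw [← zpow_natCast]
      congr 1
      push_cast
      omega
    rw [hz, e1, e2, e3]
    have hq3 : (1 : ℂ) - q ^ (k+1) * q ^ (N - k) ≠ 0 := by
      rw [hpow]; exact one_sub_pow_ne hq N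
    field_simp
    ring
  rcases eq_or_lt_of_le (show (N:ℤ) + 1 ≤ m by omega) with h3 | h3
  · have hm : m = ((N + 1 : ℕ) : ℤ) := by push_cast; omega
    subst hm
    rw [cb_self hq, cb_out (Or.inr (show (N:ℤ) < ((N+1:ℕ):ℤ) by push_cast; omega)),
      show ((N + 1 : ℕ) : ℤ) - 1 = ((N : ℕ) : ℤ) by push_cast; ring, cb_self hq,
      show (N : ℤ) + 1 - ((N+1:ℕ):ℤ) = 0 by push_cast; ring]
    simp
  · rw [cb_out (Or.inr (show ((N+1:ℕ):ℤ) < m by push_cast; omega)),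
      cb_out (Or.inr (show (N:ℤ) < m by push_cast; omega)),
      cb_out (Or.inr (show (N:ℤ) < m - 1 by push_cast; omega))]
    ring

/-! ### Bounds -/

lemma prod_one_sub_ge (x : ℕ → ℝ) (hx : ∀ k, 0 ≤ x k ∧ x k ≤ 1) (K : ℕ) :
    ∀ n, 1 - ∑ k ∈ Finset.Ico K n, x k ≤ ∏ k ∈ Finset.Ico K n, (1 - x k) := by
  intro n
  induction n with
  | zero => simp
  | succ n ih =>
    by_cases h : K ≤ n
    · rw [Finset.prod_Ico_succ_top h, Finset.sum_Ico_succ_top h]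
      have hs : (0:ℝ) ≤ ∑ k ∈ Finset.Ico K n, x k :=
        Finset.sum_nonneg fun k _ => (hx k).1
      nlinarith [(hx n).1, (hx n).2, ih]
    · rw [Finset.Ico_eq_empty (by omega : ¬ K < n + 1)]
      simp

lemma geom_tail_le (hq : ‖q‖ < 1) (K n : ℕ) :
    ∑ k ∈ Finset.Ico K n, ‖q‖ ^ (k + 1) ≤ ‖q‖ ^ (K + 1) * (1 - ‖q‖)⁻¹ := by
  have h0 : (0:ℝ) ≤ ‖q‖ := norm_nonneg q
  have h1 : (0:ℝ) < 1 - ‖q‖ := by linarith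
  rcases le_or_gt n K with h | h
  · rw [Finset.Ico_eq_empty (by omega : ¬ K < n)]
    simp only [Finset.sum_empty]
    exact mul_nonneg (pow_nonneg h0 _) (inv_nonneg.2 h1.le)
  · have he : ∑ k ∈ Finset.Ico K n, ‖q‖ ^ (k + 1)
        = ‖q‖ ^ (K + 1) * ∑ j ∈ Finset.range (n - K), ‖q‖ ^ j := by
      rw [Finset.mul_sum, Finset.sum_Ico_eq_sum_range]
      apply Finset.sum_congr rfl
      intro j _
      rw [← pow_add]
      congr 1
      omega
    rw [he]
    have h2 : ∑ j ∈ Finset.range (n - K), ‖q‖ ^ j ≤ (1 - ‖q‖)⁻¹ := by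
      rw [geom_sum_eq (by intro hc; rw [hc] at hq; exact lt_irrefl _ hq)]
      rw [div_le_iff_of_neg (by linarith : ‖q‖ - 1 < 0)]
      have hinv : (1 - ‖q‖)⁻¹ * (1 - ‖q‖) = 1 := inv_mul_cancel₀ (ne_of_gt h1)
      have hpnn : (0:ℝ) ≤ ‖q‖ ^ (n - K) := by positivity
      nlinarith
    have h3 : (0:ℝ) ≤ ‖q‖ ^ (K + 1) := by positivity
    exact mul_le_mul_of_nonneg_left h2 h3

lemma qp_split (K n : ℕ) (h : K ≤ n) :
    qp q q n = qp q q K * ∏ k ∈ Finset.Ico K n, (1 - q ^ (k + 1)) := by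
  rw [qp_eq, qp_eq, ← Finset.prod_range_mul_prod_Ico _ h]

lemma exists_lb (hq : ‖q‖ < 1) : ∃ c : ℝ, 0 < c ∧ ∀ n, c ≤ ‖qp q q n‖ := by
  have h0 : (0:ℝ) ≤ ‖q‖ := norm_nonneg q
  have h1 : (0:ℝ) < 1 - ‖q‖ := by linarith
  obtain ⟨K, hK⟩ : ∃ K : ℕ, ‖q‖ ^ (K + 1) * (1 - ‖q‖)⁻¹ ≤ 1 / 2 := by
    rcases eq_or_lt_of_le h0 with hz | hz
    · exact ⟨0, by rw [← hz]; norm_num⟩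
    · obtain ⟨K, hK⟩ := exists_pow_lt_of_lt_one (show (0:ℝ) < (1/2) * (1 - ‖q‖) by positivity) hq
      refine ⟨K, ?_⟩
      rw [← le_div_iff₀ (inv_pos.2 h1)]
      have : ‖q‖ ^ (K + 1) ≤ ‖q‖ ^ K := pow_le_pow_of_le_one h0 hq.le (by omega)
      calc ‖q‖ ^ (K+1) ≤ ‖q‖ ^ K := this
        _ ≤ 1/2 * (1 - ‖q‖) := hK.le
        _ = 1/2 / (1 - ‖q‖)⁻¹ := by field_simp
  -- lower bound for the tail product
  have tail : ∀ n, K ≤ n → (1:ℝ)/2 ≤ ‖∏ k ∈ Finset.Ico K n, (1 - q ^ (k + 1))‖ := by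
    intro n hn
    have hnorm : ∏ k ∈ Finset.Ico K n, (1 - ‖q‖ ^ (k+1))
        ≤ ‖∏ k ∈ Finset.Ico K n, (1 - q ^ (k + 1))‖ := by
      rw [norm_prod]
      apply Finset.prod_le_prod
      · intro k _
        have : ‖q‖ ^ (k+1) ≤ ‖q‖ ^ (0+1) := pow_le_pow_of_le_one h0 hq.le (by omega)
        simp only [zero_add, pow_one] at this
        linarith
      · intro k _
        calc 1 - ‖q‖ ^ (k+1) = 1 - ‖q ^ (k+1)‖ := by rw [norm_pow]
          _ ≤ ‖(1:ℂ)‖ - ‖q ^ (k+1)‖ := by rw [norm_one]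
          _ ≤ ‖1 - q ^ (k+1)‖ := norm_sub_norm_le _ _
    have hW : 1 - ∑ k ∈ Finset.Ico K n, ‖q‖ ^ (k+1)
        ≤ ∏ k ∈ Finset.Ico K n, (1 - ‖q‖ ^ (k+1)) := by
      apply prod_one_sub_ge
      intro k
      constructor
      · positivity
      · have : ‖q‖ ^ (k+1) ≤ ‖q‖ ^ (0+1) := pow_le_pow_of_le_one h0 hq.le (by omega)
        simp only [zero_add, pow_one] at this
        linarith
    have hT := geom_tail_le hq K n
    linarith
  -- combine
  have hpos : ∀ n, 0 < ‖qp q q n‖ := fun n => norm_pos_iff.2 (qp_ne hq n)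
  classical
  set c1 : ℝ := (Finset.range (K + 1)).inf' (by simp) (fun n => ‖qp q q n‖) with hc1
  have hc1pos : 0 < c1 := by
    rw [hc1]
    apply (Finset.lt_inf'_iff _).2
    intro i _
    exact hpos i
  refine ⟨min c1 (‖qp q q K‖ / 2), lt_min hc1pos (div_pos (hpos K) (by norm_num)), ?_⟩
  intro n
  rcases lt_or_ge n (K + 1) with h | h
  · refine le_trans (min_le_left _ _) ?_
    rw [hc1]
    exact Finset.inf'_le _ (Finset.mem_range.2 h)
  · refine le_trans (min_le_right _ _) ?_
    rw [qp_split K n (by omega), norm_mul]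
    have := tail n (by omega)
    have h2 := hpos K
    calc ‖qp q q K‖ / 2 = ‖qp q q K‖ * (1/2) := by ring
      _ ≤ ‖qp q q K‖ * ‖∏ k ∈ Finset.Ico K n, (1 - q ^ (k + 1))‖ :=
        mul_le_mul_of_nonneg_left this (norm_nonneg _)

lemma exists_ub (hq : ‖q‖ < 1) : ∃ R : ℝ, 1 ≤ R ∧ ∀ n, ‖qp q q n‖ ≤ R := by
  have h0 : (0:ℝ) ≤ ‖q‖ := norm_nonneg q
  have h1 : (0:ℝ) < 1 - ‖q‖ := by linarith
  refine ⟨Real.exp (‖q‖ * (1 - ‖q‖)⁻¹), Real.one_le_exp (by positivity), ?_⟩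
  intro n
  rw [qp_eq, norm_prod]
  have step : ∀ k ∈ Finset.range n, ‖(1:ℂ) - q ^ (k+1)‖ ≤ Real.exp (‖q‖ ^ (k+1)) := by
    intro k _
    calc ‖(1:ℂ) - q ^ (k+1)‖ ≤ ‖(1:ℂ)‖ + ‖q ^ (k+1)‖ := norm_sub_le _ _
      _ = 1 + ‖q‖ ^ (k+1) := by rw [norm_one, norm_pow]
      _ ≤ Real.exp (‖q‖ ^ (k+1)) := by
          have := Real.add_one_le_exp (‖q‖ ^ (k+1))
          linarith
  calc ∏ k ∈ Finset.range n, ‖(1:ℂ) - q ^ (k+1)‖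
      ≤ ∏ k ∈ Finset.range n, Real.exp (‖q‖ ^ (k+1)) := by
        apply Finset.prod_le_prod (fun k _ => norm_nonneg _) step
    _ = Real.exp (∑ k ∈ Finset.range n, ‖q‖ ^ (k+1)) := by rw [Real.exp_sum]
    _ ≤ Real.exp (‖q‖ * (1 - ‖q‖)⁻¹) := by
        apply Real.exp_le_exp.2
        have := geom_tail_le hq 0 n
        simpa using this

lemma exists_cb_bound (hq : ‖q‖ < 1) : ∃ B : ℝ, 0 < B ∧ ∀ N m, ‖cb q N m‖ ≤ B := by
  obtain ⟨c, hc, hlb⟩ := exists_lb hq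
  obtain ⟨R, hR1, hub⟩ := exists_ub hq
  refine ⟨R / (c * c), by positivity, ?_⟩
  intro N m
  by_cases h : 0 ≤ m ∧ m ≤ (N : ℤ)
  · rw [cb, if_pos h, norm_div, norm_mul]
    apply div_le_div₀ (by positivity) (hub N) (by positivity)
    exact mul_le_mul (hlb _) (hlb _) hc.le ((hc.trans_le (hlb _)).le.trans (le_refl _))
  · rw [cb, if_neg h, norm_zero]
    positivity

/-! ### The infinite product -/

noncomputable def Pinf (q : ℂ) : ℂ := ∏' k : ℕ, (1 - q ^ (k + 1))

lemma multipliable_one_sub_pow (hq : ‖q‖ < 1) :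
    Multipliable (fun k : ℕ => 1 - q ^ (k + 1)) := by
  have h0 : (0:ℝ) ≤ ‖q‖ := norm_nonneg q
  obtain ⟨K, hK⟩ : ∃ K : ℕ, ‖q‖ ^ (K + 1) ≤ 1 / 2 := by
    rcases eq_or_lt_of_le h0 with hz | hz
    · exact ⟨0, by rw [← hz]; norm_num⟩
    · obtain ⟨K, hK⟩ := exists_pow_lt_of_lt_one (show (0:ℝ) < 1/2 by norm_num) hq
      exact ⟨K, le_trans (pow_le_pow_of_le_one h0 hq.le (by omega)) hK.le⟩
  have hlog : Summable fun k : ℕ => Complex.log (1 - q ^ (k + 1)) := by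
    rw [← summable_nat_add_iff K]
    apply Summable.of_norm_bounded (g := fun n => 3/2 * (‖q‖ ^ (K + 1) * ‖q‖ ^ n))
    · apply Summable.mul_left
      exact (summable_geometric_of_lt_one h0 hq).mul_left _
    · intro n
      have hsmall : ‖-(q ^ (n + K + 1))‖ ≤ 1/2 := by
        rw [norm_neg, norm_pow]
        exact le_trans (pow_le_pow_of_le_one h0 hq.le (by omega)) hK
      have := Complex.norm_log_one_add_half_le_self hsmall
      have heq : (1 : ℂ) + -(q ^ (n + K + 1)) = 1 - q ^ (n + K + 1) := by ring
      rw [heq] at this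
      have heq2 : (1:ℂ) - q ^ (n + K + 1) = 1 - q ^ ((n + K) + 1) := by ring_nf
      calc ‖Complex.log (1 - q ^ (n + K + 1))‖ ≤ 3/2 * ‖-(q ^ (n + K + 1))‖ := this
        _ = 3/2 * (‖q‖ ^ (K+1) * ‖q‖ ^ n) := by
            rw [norm_neg, norm_pow, ← pow_add]
            congr 2
            omega
  exact Complex.multipliable_of_summable_log hlog

lemma tendsto_qp (hq : ‖q‖ < 1) :
    Tendsto (fun n => qp q q n) atTop (𝓝 (Pinf q)) := by
  have h := (multipliable_one_sub_pow hq).hasProd.tendsto_prod_nat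
  apply h.congr
  intro n
  rw [qp_eq]

lemma Pinf_ne (hq : ‖q‖ < 1) : Pinf q ≠ 0 := by
  obtain ⟨c, hc, hlb⟩ := exists_lb hq
  have : c ≤ ‖Pinf q‖ :=
    ge_of_tendsto ((tendsto_qp hq).norm) (Filter.Eventually.of_forall hlb)
  intro h
  rw [h, norm_zero] at this
  linarith

lemma tendsto_cb (hq : ‖q‖ < 1) {N : ℕ → ℕ} {m : ℕ → ℤ}
    (hm : Tendsto (fun n => (m n).toNat) atTop atTop)
    (hd : Tendsto (fun n => N n - (m n).toNat) atTop atTop)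
    (hin : ∀ᶠ n in atTop, 0 ≤ m n ∧ m n ≤ (N n : ℤ)) :
    Tendsto (fun n => cb q (N n) (m n)) atTop (𝓝 (Pinf q)⁻¹) := by
  have hN : Tendsto N atTop atTop :=
    tendsto_atTop_mono (fun n => Nat.sub_le _ _) hd
  have h1 : Tendsto (fun n => qp q q (N n)) atTop (𝓝 (Pinf q)) := (tendsto_qp hq).comp hN
  have h2 : Tendsto (fun n => qp q q (m n).toNat) atTop (𝓝 (Pinf q)) := (tendsto_qp hq).comp hm
  have h3 : Tendsto (fun n => qp q q (N n - (m n).toNat)) atTop (𝓝 (Pinf q)) :=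
    (tendsto_qp hq).comp hd
  have key : Tendsto (fun n => qp q q (N n) / (qp q q (m n).toNat * qp q q (N n - (m n).toNat)))
      atTop (𝓝 (Pinf q / (Pinf q * Pinf q))) :=
    h1.div (h2.mul h3) (mul_ne_zero (Pinf_ne hq) (Pinf_ne hq))
  have hval : Pinf q / (Pinf q * Pinf q) = (Pinf q)⁻¹ := by
    field_simp
  rw [hval] at key
  apply key.congr'
  filter_upwards [hin] with n h
  rw [cb, if_pos h]

end RRaux

namespace RRaux
open Filter Topology

variable {q : ℂ}

/-! ### The two polynomial sequences -/

noncomputable def fpoly (q : ℂ) (a n : ℕ) : ℂ :=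
  ∑' k : ℕ, q ^ (k * (k + a)) * cb q (n - k) (k : ℤ)

def E (a : ℕ) (j : ℤ) : ℤ := (5 * j * j + j) / 2 + a * j

lemma two_mul_E (a : ℕ) (j : ℤ) : 2 * E a j = 5 * j * j + j + 2 * a * j := by
  have h : (2:ℤ) ∣ (5 * j * j + j) := by
    rcases Int.even_or_odd j with ⟨t, ht⟩ | ⟨t, ht⟩
    · exact ⟨10 * t * t + t, by subst ht; ring⟩
    · exact ⟨10 * t * t + 11 * t + 3, by subst ht; ring⟩
  unfold E
  rw [mul_add, Int.mul_ediv_cancel' h]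
  ring

noncomputable def bterm (q : ℂ) (a n : ℕ) (j : ℤ) : ℂ :=
  (-1) ^ j * q ^ (E a j) * cb q (n + a) (((n : ℤ) - 5 * j) / 2)

noncomputable def bpoly (q : ℂ) (a n : ℕ) : ℂ := ∑' j : ℤ, bterm q a n j

noncomputable def lterm (q : ℂ) (a n : ℕ) (j : ℤ) : ℂ :=
  (-1) ^ j * (if ((n : ℤ) - j) % 2 = 0
    then q ^ (E a j) * q ^ (((n : ℤ) + 2 - 5 * j) / 2) *
      cb q (n + 1 + a) (((n : ℤ) + 2 - 5 * j) / 2)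
    else q ^ (E a j) * q ^ ((n : ℤ) + 2 + (a : ℤ) - ((n : ℤ) + 1 - 5 * j) / 2) *
      cb q (n + 1 + a) (((n : ℤ) + 1 - 5 * j) / 2 - 1))

noncomputable def rterm (q : ℂ) (a n : ℕ) (j : ℤ) : ℂ :=
  (-1) ^ j * (if ((n : ℤ) - j) % 2 = 0
    then q ^ (E a j) * q ^ (((n : ℤ) + 2 - 5 * j) / 2) *
      cb q (n + a) (((n : ℤ) + 2 - 5 * j) / 2)
    else q ^ (E a j) * q ^ ((n : ℤ) + 2 + (a : ℤ) - ((n : ℤ) + 1 - 5 * j) / 2) *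
      cb q (n + a) (((n : ℤ) + 1 - 5 * j) / 2 - 2))

lemma summable_of_bdd_support {f : ℤ → ℂ} (B : ℤ) (h : ∀ j, (j < -B ∨ B < j) → f j = 0) :
    Summable f := by
  apply summable_of_ne_finset_zero (s := Finset.Icc (-B) B)
  intro j hj
  apply h
  simp only [Finset.mem_Icc] at hj
  omega

lemma bterm_out (a n : ℕ) (j : ℤ)
    (hj : j < -((n:ℤ) + (a:ℤ) + 9) ∨ ((n:ℤ) + (a:ℤ) + 9) < j) : bterm q a n j = 0 := by
  rw [bterm, cb_out (show ((n:ℤ) - 5*j)/2 < 0 ∨ ((n + a : ℕ) : ℤ) < ((n:ℤ) - 5*j)/2 by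
    push_cast; omega)]
  ring

lemma summable_bterm (a n : ℕ) : Summable (bterm q a n) :=
  summable_of_bdd_support ((n:ℤ) + (a:ℤ) + 9) (fun j hj => bterm_out a n j hj)

lemma lterm_out (a n : ℕ) (j : ℤ)
    (hj : j < -((n:ℤ) + (a:ℤ) + 9) ∨ ((n:ℤ) + (a:ℤ) + 9) < j) : lterm q a n j = 0 := by
  rw [lterm]
  split_ifs with h
  · rw [cb_out (show ((n:ℤ)+2-5*j)/2 < 0 ∨ ((n+1+a : ℕ) : ℤ) < ((n:ℤ)+2-5*j)/2 by
      push_cast; omega)]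
    ring
  · rw [cb_out (show ((n:ℤ)+1-5*j)/2 - 1 < 0 ∨ ((n+1+a : ℕ) : ℤ) < ((n:ℤ)+1-5*j)/2 - 1 by
      push_cast; omega)]
    ring

lemma summable_lterm (a n : ℕ) : Summable (lterm q a n) :=
  summable_of_bdd_support ((n:ℤ) + (a:ℤ) + 9) (fun j hj => lterm_out a n j hj)

lemma rterm_out (a n : ℕ) (j : ℤ)
    (hj : j < -((n:ℤ) + (a:ℤ) + 9) ∨ ((n:ℤ) + (a:ℤ) + 9) < j) : rterm q a n j = 0 := by
  rw [rterm]
  split_ifs with h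
  · rw [cb_out (show ((n:ℤ)+2-5*j)/2 < 0 ∨ ((n+a : ℕ) : ℤ) < ((n:ℤ)+2-5*j)/2 by
      push_cast; omega)]
    ring
  · rw [cb_out (show ((n:ℤ)+1-5*j)/2 - 2 < 0 ∨ ((n+a : ℕ) : ℤ) < ((n:ℤ)+1-5*j)/2 - 2 by
      push_cast; omega)]
    ring

lemma summable_rterm (a n : ℕ) : Summable (rterm q a n) :=
  summable_of_bdd_support ((n:ℤ) + (a:ℤ) + 9) (fun j hj => rterm_out a n j hj)

lemma step1 (hq : ‖q‖ < 1) (a n : ℕ) (j : ℤ) :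
    bterm q a (n+2) j = bterm q a (n+1) j + lterm q a n j := by
  rw [bterm, bterm, lterm,
    show (((n+2:ℕ)) : ℤ) = (n : ℤ) + 2 by push_cast; ring,
    show (((n+1:ℕ)) : ℤ) = (n : ℤ) + 1 by push_cast; ring,
    show (n+2)+a = (n+1+a)+1 by omega]
  by_cases hpar : ((n : ℤ) - j) % 2 = 0
  · rw [if_pos hpar, pascalB hq (n+1+a) (((n:ℤ) + 2 - 5*j)/2),
      show ((n:ℤ) + 2 - 5*j)/2 - 1 = ((n:ℤ) + 1 - 5*j)/2 by omega]
    ring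
  · rw [if_neg hpar, pascalA hq (n+1+a) (((n:ℤ) + 2 - 5*j)/2),
      show ((n:ℤ) + 2 - 5*j)/2 = ((n:ℤ) + 1 - 5*j)/2 by omega,
      show ((n+1+a : ℕ) : ℤ) + 1 - (((n:ℤ) + 1 - 5*j)/2)
        = (n : ℤ) + 2 + (a : ℤ) - ((n : ℤ) + 1 - 5 * j) / 2 by push_cast; ring]
    ring

lemma step2 (hq : ‖q‖ < 1) (hq0 : q ≠ 0) (a n : ℕ) (j : ℤ) :
    lterm q a n j = q ^ ((n:ℤ) + 1 + (a:ℤ)) * bterm q a n j + rterm q a n j := by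
  rw [bterm, lterm, rterm, show n+1+a = (n+a)+1 by omega]
  by_cases hpar : ((n : ℤ) - j) % 2 = 0
  · rw [if_pos hpar, if_pos hpar, pascalA hq (n+a) (((n:ℤ) + 2 - 5*j)/2),
      show ((n:ℤ) + 2 - 5*j)/2 - 1 = ((n:ℤ) - 5*j)/2 by omega]
    have hc : q ^ (((n+a : ℕ) : ℤ) + 1 - (((n:ℤ) + 2 - 5*j)/2)) * q ^ (((n:ℤ) + 2 - 5*j)/2)
        = q ^ ((n:ℤ) + 1 + (a:ℤ)) := by
      rw [← zpow_add₀ hq0]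
      congr 1
      push_cast
      ring
    linear_combination ((-1:ℂ)) ^ j * q ^ (E a j) * cb q (n+a) (((n:ℤ) - 5*j)/2) * hc
  · rw [if_neg hpar, if_neg hpar, pascalB hq (n+a) (((n:ℤ) + 1 - 5*j)/2 - 1),
      show ((n:ℤ) + 1 - 5*j)/2 - 1 - 1 = ((n:ℤ) + 1 - 5*j)/2 - 2 by ring,
      show ((n:ℤ) - 5*j)/2 = ((n:ℤ) + 1 - 5*j)/2 - 1 by omega]
    have hc : q ^ ((n : ℤ) + 2 + (a : ℤ) - ((n : ℤ) + 1 - 5 * j) / 2)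
          * q ^ (((n:ℤ) + 1 - 5*j)/2 - 1)
        = q ^ ((n:ℤ) + 1 + (a:ℤ)) := by
      rw [← zpow_add₀ hq0]
      congr 1
      ring
    linear_combination ((-1:ℂ)) ^ j * q ^ (E a j) * cb q (n+a) (((n:ℤ) + 1 - 5*j)/2 - 1) * hc

lemma step3 (hq0 : q ≠ 0) (a n : ℕ) (j : ℤ) (hpar : ((n:ℤ) - j) % 2 = 0) :
    rterm q a n j + rterm q a n (j-1) = 0 := by
  rw [rterm, rterm, if_pos hpar, if_neg (show ¬((n:ℤ) - (j-1)) % 2 = 0 by omega),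
    show ((n:ℤ) + 1 - 5*(j-1))/2 - 2 = ((n:ℤ) + 2 - 5*j)/2 by omega]
  have hsign : ((-1:ℂ)) ^ (j-1) = -((-1:ℂ)) ^ j := by
    rw [zpow_sub₀ (by norm_num : (-1:ℂ) ≠ 0), zpow_one]
    ring
  rw [hsign]
  have hpowE : q ^ (E a (j-1)) * q ^ ((n : ℤ) + 2 + (a : ℤ) - ((n : ℤ) + 1 - 5 * (j-1)) / 2)
      = q ^ (E a j) * q ^ (((n:ℤ) + 2 - 5*j)/2) := by
    rw [← zpow_add₀ hq0, ← zpow_add₀ hq0]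
    congr 1
    have h1 := two_mul_E a j
    have h2 := two_mul_E a (j-1)
    have hm : 2 * (((n:ℤ) + 2 - 5*j)/2) = (n:ℤ) + 2 - 5*j := by omega
    have hm' : 2 * (((n:ℤ) + 1 - 5*(j-1))/2) = (n:ℤ) + 6 - 5*j := by omega
    ring_nf at h1 h2 hm hm' ⊢
    linarith [h1, h2, hm, hm']
  linear_combination -((-1:ℂ)) ^ j * cb q (n+a) (((n:ℤ) + 2 - 5*j)/2) * hpowE

lemma tsum_rterm_zero (hq0 : q ≠ 0) (a n : ℕ) : ∑' j : ℤ, rterm q a n j = 0 := by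
  classical
  have hinv : Function.Involutive
      (fun j : ℤ => if ((n:ℤ) - j) % 2 = 0 then j - 1 else j + 1) := by
    intro j
    by_cases h : ((n:ℤ) - j) % 2 = 0
    · simp only [if_pos h, if_neg (show ¬((n:ℤ) - (j-1)) % 2 = 0 by omega)]
      ring
    · simp only [if_neg h, if_pos (show ((n:ℤ) - (j+1)) % 2 = 0 by omega)]
      ring
  have hkey : ∀ j : ℤ,
      rterm q a n (if ((n:ℤ) - j) % 2 = 0 then j - 1 else j + 1) = - rterm q a n j := by
    intro j
    by_cases h : ((n:ℤ) - j) % 2 = 0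
    · rw [if_pos h]
      linear_combination step3 hq0 a n j h
    · rw [if_neg h]
      have h3 := step3 hq0 a n (j+1) (show ((n:ℤ) - (j+1)) % 2 = 0 by omega)
      rw [show (j + 1 - 1 : ℤ) = j by ring] at h3
      linear_combination h3
  have h1 : ∑' j : ℤ, rterm q a n (hinv.toPerm _ j) = ∑' j : ℤ, rterm q a n j :=
    (hinv.toPerm _).tsum_eq (rterm q a n)
  have h2 : ∑' j : ℤ, rterm q a n (hinv.toPerm _ j) = - ∑' j : ℤ, rterm q a n j := by
    rw [← tsum_neg]
    apply tsum_congr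
    intro j
    rw [Function.Involutive.coe_toPerm]
    exact hkey j
  have hT : (∑' j : ℤ, rterm q a n j) = -∑' j : ℤ, rterm q a n j := h1.symm.trans h2
  exact add_self_eq_zero.mp (by linear_combination hT)

lemma brec (hq : ‖q‖ < 1) (hq0 : q ≠ 0) (a n : ℕ) :
    bpoly q a (n+2) = bpoly q a (n+1) + q ^ (n+1+a) * bpoly q a n := by
  have hco : q ^ ((n:ℤ) + 1 + (a:ℤ)) = q ^ (n+1+a) := by
    rw [show (n:ℤ) + 1 + (a:ℤ) = ((n+1+a : ℕ) : ℤ) by push_cast; ring, zpow_natCast]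
  calc bpoly q a (n+2) = ∑' j : ℤ, (bterm q a (n+1) j + lterm q a n j) :=
        tsum_congr (fun j => step1 hq a n j)
    _ = bpoly q a (n+1) + ∑' j : ℤ, lterm q a n j :=
        Summable.tsum_add (summable_bterm a (n+1)) (summable_lterm a n)
    _ = bpoly q a (n+1) + ∑' j : ℤ, (q ^ ((n:ℤ) + 1 + (a:ℤ)) * bterm q a n j + rterm q a n j) := by
        rw [tsum_congr (fun j => step2 hq hq0 a n j)]
    _ = bpoly q a (n+1) + (q ^ ((n:ℤ) + 1 + (a:ℤ)) * bpoly q a n + ∑' j : ℤ, rterm q a n j) := by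
        rw [Summable.tsum_add ((summable_bterm a n).mul_left _) (summable_rterm a n), tsum_mul_left]
        rfl
    _ = bpoly q a (n+1) + q ^ (n+1+a) * bpoly q a n := by
        rw [tsum_rterm_zero hq0, hco]
        ring

lemma fterm_out (a n : ℕ) {k : ℕ} (hk : n < k) :
    q ^ (k * (k + a)) * cb q (n - k) (k : ℤ) = 0 := by
  rw [cb_out (Or.inr (show ((n - k : ℕ) : ℤ) < (k : ℤ) by omega))]
  ring

lemma summable_fterm (a n : ℕ) :
    Summable (fun k : ℕ => q ^ (k * (k + a)) * cb q (n - k) (k : ℤ)) := by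
  apply summable_of_ne_finset_zero (s := Finset.range (n+1))
  intro k hk
  exact fterm_out a n (by simpa using hk)

lemma fstep (hq : ‖q‖ < 1) (a n : ℕ) (k : ℕ) :
    q ^ (k * (k + a)) * cb q (n+2 - k) (k : ℤ)
      = q ^ (k * (k + a)) * cb q (n+1 - k) (k : ℤ)
        + q ^ (k * (k + a)) * q ^ ((n:ℤ) + 2 - 2 * (k:ℤ)) * cb q (n+1 - k) ((k:ℤ) - 1) := by
  rcases le_or_gt k (n+1) with h | h
  · rw [show n+2-k = (n+1-k)+1 by omega, pascalA hq (n+1-k) (k:ℤ),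
      show ((n+1-k : ℕ) : ℤ) + 1 - (k:ℤ) = (n:ℤ) + 2 - 2 * (k:ℤ) by omega]
    ring
  · rw [cb_out (Or.inr (show ((n+2-k : ℕ) : ℤ) < (k : ℤ) by omega)),
      cb_out (Or.inr (show ((n+1-k : ℕ) : ℤ) < (k : ℤ) by omega)),
      cb_out (Or.inr (show ((n+1-k : ℕ) : ℤ) < (k : ℤ) - 1 by omega))]
    ring

lemma gshift (hq : ‖q‖ < 1) (hq0 : q ≠ 0) (a n : ℕ) (k : ℕ) :
    q ^ ((k+1) * ((k+1) + a)) * q ^ ((n:ℤ) + 2 - 2 * ((k+1:ℕ):ℤ)) * cb q (n+1 - (k+1)) (((k+1:ℕ):ℤ) - 1)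
      = q ^ (n+1+a) * (q ^ (k * (k + a)) * cb q (n - k) (k : ℤ)) := by
  rw [show n+1-(k+1) = n-k by omega, show ((k+1:ℕ):ℤ) - 1 = (k:ℤ) by push_cast; ring]
  have hcc : q ^ ((k+1) * ((k+1) + a)) * q ^ ((n:ℤ) + 2 - 2 * ((k+1:ℕ):ℤ))
      = q ^ (n+1+a) * q ^ (k * (k + a)) := by
    rw [← zpow_natCast q ((k+1) * ((k+1) + a)), ← zpow_natCast q (n+1+a),
      ← zpow_natCast q (k * (k + a)), ← zpow_add₀ hq0, ← zpow_add₀ hq0]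
    congr 1
    push_cast
    ring
  linear_combination (cb q (n-k) (k:ℤ)) * hcc

lemma frec (hq : ‖q‖ < 1) (hq0 : q ≠ 0) (a n : ℕ) :
    fpoly q a (n+2) = fpoly q a (n+1) + q ^ (n+1+a) * fpoly q a n := by
  have hg : Summable (fun k : ℕ =>
      q ^ (k * (k + a)) * q ^ ((n:ℤ) + 2 - 2 * (k:ℤ)) * cb q (n+1 - k) ((k:ℤ) - 1)) := by
    apply summable_of_ne_finset_zero (s := Finset.range (n+3))
    intro k hk
    have hk3 : n + 3 ≤ k := by simpa using hk
    rw [cb_out (Or.inr (show ((n+1-k : ℕ) : ℤ) < (k : ℤ) - 1 by omega))]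
    ring
  calc fpoly q a (n+2)
      = ∑' k : ℕ, (q ^ (k * (k + a)) * cb q (n+1 - k) (k : ℤ)
        + q ^ (k * (k + a)) * q ^ ((n:ℤ) + 2 - 2 * (k:ℤ)) * cb q (n+1 - k) ((k:ℤ) - 1)) :=
        tsum_congr (fun k => fstep hq a n k)
    _ = fpoly q a (n+1) + ∑' k : ℕ,
          q ^ (k * (k + a)) * q ^ ((n:ℤ) + 2 - 2 * (k:ℤ)) * cb q (n+1 - k) ((k:ℤ) - 1) :=
        Summable.tsum_add (summable_fterm a (n+1)) hg
    _ = fpoly q a (n+1) + q ^ (n+1+a) * fpoly q a n := by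
        congr 1
        rw [Summable.tsum_eq_zero_add hg, cb_out (Or.inl (show ((0:ℕ):ℤ) - 1 < 0 by omega)),
          mul_zero, zero_add]
        rw [tsum_congr (fun k => gshift hq hq0 a n k), tsum_mul_left]
        rfl

lemma finit0 (hq : ‖q‖ < 1) (a : ℕ) : fpoly q a 0 = 1 := by
  rw [fpoly, tsum_eq_single 0 ?_]
  · simp only [Nat.zero_sub, Nat.cast_zero, zero_mul, pow_zero, one_mul]
    exact cb_zero hq 0
  · intro k hk
    rw [cb_out (Or.inr (show ((0 - k : ℕ) : ℤ) < (k : ℤ) by omega))]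
    ring

lemma finit1 (hq : ‖q‖ < 1) (a : ℕ) : fpoly q a 1 = 1 := by
  rw [fpoly, tsum_eq_single 0 ?_]
  · simp only [Nat.cast_zero, zero_mul, pow_zero, one_mul]
    exact cb_zero hq 1
  · intro k hk
    rw [cb_out (Or.inr (show ((1 - k : ℕ) : ℤ) < (k : ℤ) by omega))]
    ring

lemma E_zero (a : ℕ) : E a 0 = 0 := by
  unfold E
  norm_num

lemma binit0 (hq : ‖q‖ < 1) (a : ℕ) (ha : a ≤ 1) : bpoly q a 0 = 1 := by
  rw [bpoly, tsum_eq_single 0 ?_]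
  · rw [bterm, E_zero, zpow_zero,
      show ((((0:ℕ)):ℤ) - 5 * 0) / 2 = 0 by norm_num, cb_zero hq]
    norm_num
  · intro j hj
    rw [bterm, cb_out (show (((0:ℕ):ℤ) - 5*j)/2 < 0 ∨ ((0+a : ℕ) : ℤ) < (((0:ℕ):ℤ) - 5*j)/2 by
      push_cast; omega)]
    ring

lemma binit1 (hq : ‖q‖ < 1) (a : ℕ) (ha : a ≤ 1) : bpoly q a 1 = 1 := by
  rw [bpoly, tsum_eq_single 0 ?_]
  · rw [bterm, E_zero, zpow_zero,
      show ((((1:ℕ)):ℤ) - 5 * 0) / 2 = 0 by norm_num, cb_zero hq]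
    norm_num
  · intro j hj
    rw [bterm, cb_out (show (((1:ℕ):ℤ) - 5*j)/2 < 0 ∨ ((1+a : ℕ) : ℤ) < (((1:ℕ):ℤ) - 5*j)/2 by
      push_cast; omega)]
    ring

lemma feqb (hq : ‖q‖ < 1) (hq0 : q ≠ 0) (a : ℕ) (ha : a ≤ 1) :
    ∀ n, fpoly q a n = bpoly q a n := by
  have H : ∀ n, fpoly q a n = bpoly q a n ∧ fpoly q a (n+1) = bpoly q a (n+1) := by
    intro n
    induction n with
    | zero => exact ⟨(finit0 hq a).trans (binit0 hq a ha).symm,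
        (finit1 hq a).trans (binit1 hq a ha).symm⟩
    | succ n ih => exact ⟨ih.2, by
        rw [show n+1+1 = n+2 from rfl, frec hq hq0 a n, brec hq hq0 a n, ih.1, ih.2]⟩
  exact fun n => (H n).1

end RRaux

namespace RRaux
open Filter Topology

variable {q : ℂ}

lemma E_ge_abs (a : ℕ) (ha : a ≤ 1) (j : ℤ) : |j| ≤ E a j := by
  have h := two_mul_E a j
  rcases lt_trichotomy j 0 with hj | hj | hj
  · rw [abs_of_neg hj]
    have hcast : (a:ℤ) ≤ 1 := by exact_mod_cast ha
    nlinarith [h, mul_nonneg (sub_nonneg.2 hcast) (by omega : (0:ℤ) ≤ -j),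
      mul_nonneg (by omega : (0:ℤ) ≤ -j) (by omega : (0:ℤ) ≤ -(j+1))]
  · subst hj
    rw [E_zero]
    simp
  · rw [abs_of_pos hj]
    have h5 : 0 ≤ j*(j-1) := mul_nonneg (by omega) (by omega)
    have haj : 0 ≤ 2*(a:ℤ)*j := mul_nonneg (by positivity) (by omega)
    nlinarith [h, h5, haj]

lemma summable_geo_abs (hq : ‖q‖ < 1) (B : ℝ) :
    Summable (fun j : ℤ => B * ‖q‖ ^ (|j| : ℤ)) := by
  have hgeo : Summable (fun n : ℕ => B * ‖q‖ ^ n) :=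
    (summable_geometric_of_lt_one (norm_nonneg q) hq).mul_left B
  apply Summable.of_nat_of_neg
  · apply hgeo.congr
    intro n
    rw [Int.abs_natCast, zpow_natCast]
  · apply hgeo.congr
    intro n
    rw [abs_neg, Int.abs_natCast, zpow_natCast]

lemma norm_bterm_le (hq : ‖q‖ < 1) (hq0 : q ≠ 0) (a : ℕ) (ha : a ≤ 1) {B : ℝ}
    (hcb : ∀ N m, ‖cb q N m‖ ≤ B) (n : ℕ) (j : ℤ) :
    ‖bterm q a n j‖ ≤ B * ‖q‖ ^ (|j| : ℤ) := by
  have hB : 0 ≤ B := le_trans (norm_nonneg _) (hcb 0 0)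
  have h1 : ‖((-1:ℂ)) ^ j‖ = 1 := by
    rw [norm_zpow]
    norm_num
  have h2 : ‖q ^ (E a j)‖ ≤ ‖q‖ ^ (|j| : ℤ) := by
    rw [norm_zpow]
    exact zpow_le_zpow_right_of_le_one₀ (norm_pos_iff.2 hq0) hq.le (E_ge_abs a ha j)
  have h3 : (0:ℝ) ≤ ‖q‖ ^ (|j| : ℤ) := le_trans (norm_nonneg _) h2
  calc ‖bterm q a n j‖
      = ‖((-1:ℂ)) ^ j‖ * ‖q ^ (E a j)‖ * ‖cb q (n+a) (((n:ℤ) - 5*j)/2)‖ := by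
        rw [bterm, norm_mul, norm_mul]
    _ ≤ 1 * ‖q‖ ^ (|j| : ℤ) * B := by
        apply mul_le_mul _ (hcb _ _) (norm_nonneg _) (by rw [one_mul]; exact h3)
        rw [h1, one_mul, one_mul]
        exact h2
    _ = B * ‖q‖ ^ (|j| : ℤ) := by ring

lemma tendsto_bterm (hq : ‖q‖ < 1) (a : ℕ) (j : ℤ) :
    Tendsto (fun n => bterm q a n j) atTop
      (𝓝 (((-1:ℂ)) ^ j * q ^ (E a j) * (Pinf q)⁻¹)) := by
  apply Tendsto.const_mul
  apply tendsto_cb hq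
  · apply tendsto_atTop_atTop.2
    intro b
    refine ⟨2*b + 5*j.natAbs + 10, fun n hn => ?_⟩
    omega
  · apply tendsto_atTop_atTop.2
    intro b
    refine ⟨2*b + 5*j.natAbs + 10, fun n hn => ?_⟩
    omega
  · filter_upwards [eventually_ge_atTop (5*j.natAbs + 1)] with n hn
    constructor
    · omega
    · push_cast
      omega

lemma limb (hq : ‖q‖ < 1) (hq0 : q ≠ 0) (a : ℕ) (ha : a ≤ 1) :
    Tendsto (bpoly q a) atTop
      (𝓝 (∑' j : ℤ, ((-1:ℂ)) ^ j * q ^ (E a j) * (Pinf q)⁻¹)) := by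
  obtain ⟨B, hB, hcb⟩ := exists_cb_bound hq
  exact tendsto_tsum_of_dominated_convergence (summable_geo_abs hq B)
    (fun j => tendsto_bterm hq a j)
    (Eventually.of_forall (fun n j => norm_bterm_le hq hq0 a ha hcb n j))

lemma tendsto_fterm (hq : ‖q‖ < 1) (a k : ℕ) :
    Tendsto (fun n => q ^ (k * (k + a)) * cb q (n - k) (k : ℤ)) atTop
      (𝓝 (q ^ (k * (k + a)) * (qp q q k)⁻¹)) := by
  apply Tendsto.const_mul
  have h1 : Tendsto (fun n : ℕ => qp q q (n - k)) atTop (𝓝 (Pinf q)) :=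
    (tendsto_qp hq).comp (tendsto_sub_atTop_nat k)
  have h2 : Tendsto (fun n : ℕ => qp q q (n - k - k)) atTop (𝓝 (Pinf q)) :=
    (tendsto_qp hq).comp ((tendsto_sub_atTop_nat k).comp (tendsto_sub_atTop_nat k))
  have key : Tendsto (fun n => qp q q (n - k) / (qp q q k * qp q q (n - k - k))) atTop
      (𝓝 (Pinf q / (qp q q k * Pinf q))) :=
    h1.div (tendsto_const_nhds.mul h2) (mul_ne_zero (qp_ne hq k) (Pinf_ne hq))
  have hval : Pinf q / (qp q q k * Pinf q) = (qp q q k)⁻¹ := by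
    rw [mul_comm, div_mul_eq_div_div, div_self (Pinf_ne hq), one_div]
  rw [hval] at key
  apply key.congr'
  filter_upwards [eventually_ge_atTop (2*k)] with n hn
  rw [cb_eq_of (k1 := k) (k2 := n - k - k) (by omega) rfl]

lemma limf (hq : ‖q‖ < 1) (a : ℕ) :
    Tendsto (fpoly q a) atTop (𝓝 (∑' k : ℕ, q ^ (k * (k + a)) / qp q q k)) := by
  obtain ⟨B, hB, hcb⟩ := exists_cb_bound hq
  have htarget : (∑' k : ℕ, q ^ (k * (k + a)) / qp q q k)
      = ∑' k : ℕ, q ^ (k * (k + a)) * (qp q q k)⁻¹ :=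
    tsum_congr (fun k => div_eq_mul_inv _ _)
  rw [htarget]
  apply tendsto_tsum_of_dominated_convergence
    (bound := fun k : ℕ => B * ‖q‖ ^ k)
    ((summable_geometric_of_lt_one (norm_nonneg q) hq).mul_left B)
    (fun k => tendsto_fterm hq a k)
  apply Eventually.of_forall
  intro n k
  have hle : k ≤ k * (k + a) := by
    rcases Nat.eq_zero_or_pos k with hk | hk
    · omega
    · calc k = k * 1 := (mul_one k).symm
        _ ≤ k * (k + a) := Nat.mul_le_mul_left k (by omega)
  calc ‖q ^ (k * (k + a)) * cb q (n - k) (k : ℤ)‖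
      = ‖q‖ ^ (k * (k + a)) * ‖cb q (n - k) (k : ℤ)‖ := by rw [norm_mul, norm_pow]
    _ ≤ ‖q‖ ^ k * B :=
        mul_le_mul (pow_le_pow_of_le_one (norm_nonneg q) hq.le hle) (hcb _ _)
          (norm_nonneg _) (by positivity)
    _ = B * ‖q‖ ^ k := by ring

/-! ### Reindexing the theta sum -/

noncomputable def Fb (q : ℂ) (a : ℕ) (j : ℤ) : ℂ := ((-1:ℂ)) ^ j * q ^ (E a j)

def pe (p : ℤ × Bool) : ℤ := if p.2 then -(2*p.1+1) else 2*p.1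

def pi' (k : ℤ) : ℤ × Bool := if k % 2 = 0 then (k/2, false) else (-((k+1)/2), true)

lemma pe_false (j : ℤ) : pe (j, false) = 2*j := rfl

lemma pe_true (j : ℤ) : pe (j, true) = -(2*j+1) := rfl

def pairEquiv : ℤ × Bool ≃ ℤ where
  toFun := pe
  invFun := pi'
  left_inv := by
    rintro ⟨j, b⟩
    cases b
    · rw [pe_false, pi', if_pos (by omega)]
      simp only [Prod.mk.injEq]
      exact ⟨by omega, trivial⟩
    · rw [pe_true, pi', if_neg (by omega)]
      simp only [Prod.mk.injEq]
      exact ⟨by omega, trivial⟩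
  right_inv := by
    intro k
    by_cases h : k % 2 = 0
    · rw [pi', if_pos h, pe_false]
      omega
    · rw [pi', if_neg h, pe_true]
      omega

lemma Fb_even (a : ℕ) (j : ℤ) : Fb q a (2*j) = q ^ (j*(10*j+1+2*(a:ℤ))) := by
  have hE : E a (2*j) = j*(10*j+1+2*(a:ℤ)) :=
    mul_left_cancel₀ (two_ne_zero) (by rw [two_mul_E]; ring)
  have hs : ((-1:ℂ))^(2*j) = 1 := by
    rw [zpow_mul]
    norm_num
  rw [Fb, hE, hs, one_mul]

lemma Fb_odd (a : ℕ) (j : ℤ) : Fb q a (-(2*j+1)) = - q ^ ((2*j+1)*(5*j+2-(a:ℤ))) := by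
  have hE : E a (-(2*j+1)) = (2*j+1)*(5*j+2-(a:ℤ)) :=
    mul_left_cancel₀ (two_ne_zero) (by rw [two_mul_E]; ring)
  have hs : ((-1:ℂ))^(-(2*j+1)) = -1 := by
    rw [zpow_neg, zpow_add₀ (by norm_num : (-1:ℂ) ≠ 0), zpow_mul]
    norm_num
  rw [Fb, hE, hs]
  ring

lemma summable_Fb (hq : ‖q‖ < 1) (hq0 : q ≠ 0) (a : ℕ) (ha : a ≤ 1) :
    Summable (Fb q a) := by
  apply Summable.of_norm_bounded (summable_geo_abs hq 1)
  intro j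
  rw [Fb, norm_mul, norm_zpow, norm_zpow]
  have h1 : ‖(-1:ℂ)‖ = 1 := by norm_num
  rw [h1, one_zpow, one_mul]
  have h2 : ‖q‖ ^ (E a j) ≤ ‖q‖ ^ (|j| : ℤ) :=
    zpow_le_zpow_right_of_le_one₀ (norm_pos_iff.2 hq0) hq.le (E_ge_abs a ha j)
  linarith [h2]

lemma pairEquiv_false (j : ℤ) : pairEquiv (j, false) = 2*j := rfl

lemma pairEquiv_true (j : ℤ) : pairEquiv (j, true) = -(2*j+1) := rfl

set_option maxHeartbeats 1000000 in
lemma theta_eq (hq : ‖q‖ < 1) (hq0 : q ≠ 0) (a : ℕ) (ha : a ≤ 1) :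
    ∑' j : ℤ, (q ^ (j * (10*j+1+2*(a:ℤ))) - q ^ ((2*j+1)*(5*j+2-(a:ℤ))))
      = ∑' j : ℤ, Fb q a j := by
  have hsum := summable_Fb hq hq0 a ha
  have h6 : Summable (fun p : ℤ × Bool => Fb q a (pairEquiv p)) :=
    pairEquiv.summable_iff.2 hsum
  calc ∑' j : ℤ, (q ^ (j * (10*j+1+2*(a:ℤ))) - q ^ ((2*j+1)*(5*j+2-(a:ℤ))))
      = ∑' j : ℤ, ∑' b : Bool, Fb q a (pairEquiv (j, b)) := by
        apply tsum_congr
        intro j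
        rw [tsum_fintype, Fintype.sum_bool, pairEquiv_true, pairEquiv_false,
          Fb_even, Fb_odd]
        ring
    _ = ∑' p : ℤ × Bool, Fb q a (pairEquiv p) :=
        (Summable.tsum_prod' h6 (fun j => h6.prod_factor j)).symm
    _ = ∑' j : ℤ, Fb q a j := pairEquiv.tsum_eq (Fb q a)

end RRaux

open RRaux Filter Topology in
/-- The Rogers–Ramanujan identities in Bose–Fermi form. -/
theorem rogers_ramanujan (q : ℂ) (hq : ‖q‖ < 1) (a : ℕ) (ha : a ≤ 1) :
    (∏' k : ℕ, (1 - q ^ (k + 1)))⁻¹ *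
        ∑' j : ℤ, (q ^ (j * (10 * j + 1 + 2 * (a : ℤ)))
          - q ^ ((2 * j + 1) * (5 * j + 2 - (a : ℤ))))
      = ∑' n : ℕ, q ^ (n * (n + a)) / qp q q n := by
  by_cases hq0 : q = 0
  · subst hq0
    have hP : (∏' k : ℕ, ((1:ℂ) - 0 ^ (k + 1))) = 1 := by
      rw [tprod_congr (fun k => by
        rw [zero_pow (Nat.succ_ne_zero k), sub_zero] : ∀ k : ℕ, (1:ℂ) - 0 ^ (k+1) = 1)]
      exact tprod_one
    have hΘ : ∑' j : ℤ, ((0:ℂ) ^ (j * (10 * j + 1 + 2 * (a : ℤ)))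
        - (0:ℂ) ^ ((2 * j + 1) * (5 * j + 2 - (a : ℤ)))) = 1 := by
      rw [tsum_eq_single 0 ?_]
      · rw [show (0:ℤ) * (10 * 0 + 1 + 2 * (a:ℤ)) = 0 by ring, zpow_zero,
          zero_zpow _ (show (2 * (0:ℤ) + 1) * (5 * 0 + 2 - (a:ℤ)) ≠ 0 by omega), sub_zero]
      · intro j hj
        rw [zero_zpow _ (show j * (10 * j + 1 + 2 * (a:ℤ)) ≠ 0 from ?_),
          zero_zpow _ (show (2 * j + 1) * (5 * j + 2 - (a:ℤ)) ≠ 0 from ?_), sub_self]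
        · intro hc
          rcases mul_eq_zero.1 hc with h | h
          · omega
          · omega
        · intro hc
          rcases mul_eq_zero.1 hc with h | h
          · exact hj h
          · omega
    have hR : ∑' n : ℕ, (0:ℂ) ^ (n * (n + a)) / qp 0 0 n = 1 := by
      have hqp : ∀ n, qp (0:ℂ) 0 n = 1 := fun n => by
        rw [qp_eq]
        apply Finset.prod_eq_one
        intro k _
        rw [zero_pow (Nat.succ_ne_zero k), sub_zero]
      rw [tsum_eq_single 0 ?_]
      · rw [hqp]
        norm_num
      · intro n hn
        rw [zero_pow (Nat.mul_ne_zero hn (by omega)), zero_div]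
    rw [hP, hΘ, hR]
    norm_num
  · have h1 := limf hq a
    have h2 := limb hq hq0 a ha
    have h3 : Tendsto (bpoly q a) atTop (𝓝 (∑' k : ℕ, q ^ (k * (k + a)) / qp q q k)) :=
      h1.congr (feqb hq hq0 a ha)
    have h4 := tendsto_nhds_unique h2 h3
    rw [← h4, theta_eq hq hq0 a ha,
      show (∏' k : ℕ, ((1:ℂ) - q ^ (k+1))) = Pinf q from rfl,
      tsum_congr (fun j : ℤ => show ((-1:ℂ)) ^ j * q ^ (E a j) * (Pinf q)⁻¹
        = Fb q a j * (Pinf q)⁻¹ from rfl),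
      tsum_mul_right, mul_comm]
end
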